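/- arXiv:1310.2564 — 8 statements merged into one kernel-verified Lean document; each statement's English description precedes it below -/
import Mathlib

section
/- (Chen, 1975) Let λ > 0 and let f : ℕ → ℝ be bounded. The following are equivalent: (i) there exists a bounded function g : ℕ → ℝ such that λ·g(k+1) − k·g(k) = f(k) for all k ∈ ℕ; (ii) ∑_{j=0}^∞ f(j)·e^{−λ} λ^j / j! = 0. Moreover, when these hold, the function g given by g(0) = 0 and g(k+1) = (k!/λ^{k+1}) ∑_{j=0}^{k} (λ^j/j!) f(j) for each k ∈ ℕ solves the equation in (i) and satisfies sup_{k∈ℕ} |g(k)| ≤ e^{λ} · sup_{k∈ℕ} |f(k)|. -/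
/-- The explicit solution of the Stein equation for the Poisson distribution:
`g(0) = 0` and `g(k+1) = (k!/λ^{k+1}) ∑_{j=0}^{k} (λ^j/j!) f(j)`. -/
noncomputable def steinSol (l : ℝ) (f : ℕ → ℝ) : ℕ → ℝ
  | 0 => 0
  | k + 1 =>
      ((Nat.factorial k : ℝ) / l ^ (k + 1)) *
        ∑ j ∈ Finset.range (k + 1), (l ^ j / (Nat.factorial j : ℝ)) * f j

lemma exp_tsum (l : ℝ) : Real.exp l = ∑' n : ℕ, l ^ n / (Nat.factorial n : ℝ) := by
  rw [Real.exp_eq_exp_ℝ, NormedSpace.exp_eq_tsum_div]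

lemma summable_F (l : ℝ) (f : ℕ → ℝ) (C : ℝ) (hf : ∀ k, |f k| ≤ C) :
    Summable (fun j : ℕ => f j * (Real.exp (-l) * l ^ j / (Nat.factorial j : ℝ))) := by
  apply Summable.of_norm_bounded (g :=
    (fun j : ℕ => (C * Real.exp (-l)) * (|l| ^ j / (Nat.factorial j : ℝ))))
    ((Real.summable_pow_div_factorial |l|).mul_left _)
  intro j
  have h1 : (0:ℝ) ≤ |l| ^ j / (Nat.factorial j : ℝ) := by positivity
  have h2 : (0:ℝ) ≤ Real.exp (-l) := (Real.exp_pos _).le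
  calc ‖f j * (Real.exp (-l) * l ^ j / (Nat.factorial j : ℝ))‖
      = |f j| * (Real.exp (-l) * (|l| ^ j / (Nat.factorial j : ℝ))) := by
        rw [norm_mul, Real.norm_eq_abs, Real.norm_eq_abs, abs_div, abs_mul, abs_pow,
          abs_of_nonneg h2, Nat.abs_cast, mul_div_assoc]
    _ ≤ C * (Real.exp (-l) * (|l| ^ j / (Nat.factorial j : ℝ))) := by
        apply mul_le_mul_of_nonneg_right (hf j); positivity
    _ = (C * Real.exp (-l)) * (|l| ^ j / (Nat.factorial j : ℝ)) := by ring

-- n * l^n / n! summable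
lemma summable_w (l : ℝ) : Summable (fun n : ℕ => (n : ℝ) * l ^ n / (Nat.factorial n : ℝ)) := by
  rw [← summable_nat_add_iff 1]
  have : (fun n : ℕ => ((n+1 : ℕ) : ℝ) * l ^ (n+1) / (Nat.factorial (n+1) : ℝ))
      = fun n : ℕ => l * (l ^ n / (Nat.factorial n : ℝ)) := by
    funext n
    rw [Nat.factorial_succ, pow_succ]
    push_cast
    have h : ((Nat.factorial n : ℝ)) ≠ 0 := Nat.cast_ne_zero.2 (Nat.factorial_ne_zero n)
    field_simp
  rw [this]
  exact (Real.summable_pow_div_factorial l).mul_left l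

lemma forward (l : ℝ) (hl : 0 < l) (f g : ℕ → ℝ) (C : ℝ) (hg : ∀ k, |g k| ≤ C)
    (heq : ∀ k : ℕ, l * g (k + 1) - (k : ℝ) * g k = f k)
    (hsum : Summable (fun j : ℕ => f j * (Real.exp (-l) * l ^ j / (Nat.factorial j : ℝ)))) :
    (∑' j : ℕ, f j * (Real.exp (-l) * l ^ j / (Nat.factorial j : ℝ))) = 0 := by
  set v : ℕ → ℝ := fun k => Real.exp (-l) * ((k : ℝ) * l ^ k / (Nat.factorial k : ℝ)) * g k
    with hv
  have hterm : ∀ k : ℕ, f k * (Real.exp (-l) * l ^ k / (Nat.factorial k : ℝ))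
      = v (k+1) - v k := by
    intro k
    rw [hv]
    simp only
    rw [← heq k]
    have h1 : ((Nat.factorial k : ℝ)) ≠ 0 := Nat.cast_ne_zero.2 (Nat.factorial_ne_zero k)
    have h2 : ((Nat.factorial (k+1) : ℝ)) ≠ 0 := Nat.cast_ne_zero.2 (Nat.factorial_ne_zero _)
    rw [Nat.factorial_succ] at h2 ⊢
    push_cast
    field_simp
    ring
  have hps : ∀ n : ℕ, (∑ k ∈ Finset.range n,
      f k * (Real.exp (-l) * l ^ k / (Nat.factorial k : ℝ))) = v n := by
    intro n
    calc (∑ k ∈ Finset.range n, f k * (Real.exp (-l) * l ^ k / (Nat.factorial k : ℝ)))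
        = ∑ k ∈ Finset.range n, (v (k+1) - v k) := by
          exact Finset.sum_congr rfl (fun k _ => hterm k)
      _ = v n - v 0 := Finset.sum_range_sub v n
      _ = v n := by simp [hv]
  have hC : 0 ≤ C := le_trans (abs_nonneg _) (hg 0)
  have hvlim : Filter.Tendsto v Filter.atTop (nhds 0) := by
    have hb : Filter.Tendsto (fun n : ℕ =>
        (Real.exp (-l) * C) * ((n : ℝ) * |l| ^ n / (Nat.factorial n : ℝ)))
        Filter.atTop (nhds 0) := by
      have := ((summable_w |l|).mul_left (Real.exp (-l) * C)).tendsto_atTop_zero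
      simpa using this
    refine squeeze_zero_norm (fun n => ?_) hb
    calc ‖v n‖ = Real.exp (-l) * ((n : ℝ) * |l| ^ n / (Nat.factorial n : ℝ)) * |g n| := by
          rw [hv]
          simp only [norm_mul, Real.norm_eq_abs]
          rw [abs_of_nonneg (Real.exp_pos _).le, abs_div, abs_mul, abs_pow, Nat.abs_cast,
            Nat.abs_cast]
      _ ≤ Real.exp (-l) * ((n : ℝ) * |l| ^ n / (Nat.factorial n : ℝ)) * C := by
          apply mul_le_mul_of_nonneg_left (hg n); positivity
      _ = (Real.exp (-l) * C) * ((n : ℝ) * |l| ^ n / (Nat.factorial n : ℝ)) := by ring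
  have : Filter.Tendsto (fun n => ∑ k ∈ Finset.range n,
      f k * (Real.exp (-l) * l ^ k / (Nat.factorial k : ℝ))) Filter.atTop (nhds 0) := by
    simpa only [hps] using hvlim
  exact ((hsum.hasSum_iff_tendsto_nat).2 this).tsum_eq

lemma stein_eq (l : ℝ) (hl : 0 < l) (f : ℕ → ℝ) :
    ∀ k : ℕ, l * steinSol l f (k + 1) - (k : ℝ) * steinSol l f k = f k := by
  have hl' : l ≠ 0 := ne_of_gt hl
  intro k
  cases k with
  | zero => simp only [steinSol, Nat.cast_zero, zero_mul, sub_zero, Finset.range_one,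
      Finset.sum_singleton, pow_zero, Nat.factorial_zero, Nat.cast_one, pow_one]; field_simp; simp
  | succ k =>
    simp only [steinSol]
    show l * (((Nat.factorial (k+1) : ℝ) / l ^ (k + 1 + 1)) *
        (∑ j ∈ Finset.range (k + 1 + 1), (l ^ j / (Nat.factorial j : ℝ)) * f j)) -
      ((k+1 : ℕ) : ℝ) * (((Nat.factorial k : ℝ) / l ^ (k + 1)) *
        (∑ j ∈ Finset.range (k + 1), (l ^ j / (Nat.factorial j : ℝ)) * f j)) = f (k+1)
    rw [Finset.sum_range_succ]
    have h1 : ((Nat.factorial k : ℝ)) ≠ 0 := Nat.cast_ne_zero.2 (Nat.factorial_ne_zero k)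
    have h2 : ((Nat.factorial (k+1) : ℝ)) ≠ 0 := Nat.cast_ne_zero.2 (Nat.factorial_ne_zero _)
    rw [Nat.factorial_succ] at h2 ⊢
    push_cast
    field_simp
    ring

lemma fact_div_le (k i : ℕ) :
    ((Nat.factorial k : ℝ)) / ((Nat.factorial (i + (k+1)) : ℝ)) ≤ 1 / (Nat.factorial i : ℝ) := by
  rw [div_le_div_iff₀ (by positivity) (by positivity), one_mul]
  have h : Nat.factorial k * Nat.factorial i ≤ Nat.factorial (i + (k+1)) := by
    calc Nat.factorial k * Nat.factorial i ≤ Nat.factorial (k + i) :=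
          Nat.le_of_dvd (Nat.factorial_pos _) (Nat.factorial_mul_factorial_dvd_factorial_add k i)
      _ ≤ Nat.factorial (i + (k+1)) := Nat.factorial_le (by omega)
  exact_mod_cast h

lemma stein_bound (l : ℝ) (hl : 0 < l) (f : ℕ → ℝ) (M : ℝ) (hM : ∀ k, |f k| ≤ M)
    (h0 : (∑' j : ℕ, f j * (Real.exp (-l) * l ^ j / (Nat.factorial j : ℝ))) = 0) :
    ∀ k : ℕ, |steinSol l f k| ≤ Real.exp l * M := by
  have hM0 : 0 ≤ M := le_trans (abs_nonneg _) (hM 0)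
  have hl' : l ≠ 0 := ne_of_gt hl
  set F : ℕ → ℝ := fun j => f j * (Real.exp (-l) * l ^ j / (Nat.factorial j : ℝ)) with hF
  have hsF : Summable F := summable_F l f M hM
  intro k
  cases k with
  | zero => simp only [steinSol, abs_zero]; positivity
  | succ k =>
    have htail := Summable.sum_add_tsum_nat_add (k+1) hsF
    rw [h0] at htail
    have hsum_eq : (∑ i ∈ Finset.range (k+1), F i) = -(∑' i : ℕ, F (i + (k+1))) := by
      linarith [htail]
    have hS : (∑ j ∈ Finset.range (k + 1), (l ^ j / (Nat.factorial j : ℝ)) * f j)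
        = Real.exp l * ∑ i ∈ Finset.range (k+1), F i := by
      rw [Finset.mul_sum]
      refine Finset.sum_congr rfl (fun j _ => ?_)
      rw [hF]
      simp only
      rw [Real.exp_neg]
      have he : Real.exp l ≠ 0 := (Real.exp_pos l).ne'
      field_simp
    have habs : |steinSol l f (k+1)|
        = ((Nat.factorial k : ℝ) / l ^ (k + 1)) * Real.exp l * |∑' i : ℕ, F (i + (k+1))| := by
      show |((Nat.factorial k : ℝ) / l ^ (k + 1)) *
          ∑ j ∈ Finset.range (k + 1), (l ^ j / (Nat.factorial j : ℝ)) * f j| = _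
      rw [hS, hsum_eq, abs_mul, abs_mul, abs_neg,
        abs_of_nonneg (by positivity : (0:ℝ) ≤ (Nat.factorial k : ℝ) / l ^ (k + 1)),
        abs_of_nonneg (Real.exp_pos l).le, mul_assoc]
    -- bound the tail
    have hsabs : Summable (fun i : ℕ => |F (i + (k+1))|) := by
      exact (summable_abs_iff.2 hsF).comp_injective (add_left_injective (k+1))
    have hbound1 : |∑' i : ℕ, F (i + (k+1))| ≤ ∑' i : ℕ, |F (i + (k+1))| := by
      simpa [Real.norm_eq_abs] using norm_tsum_le_tsum_norm
        (f := fun i : ℕ => F (i + (k+1))) (by simpa [Real.norm_eq_abs] using hsabs)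
    have hterm : ∀ i : ℕ, ((Nat.factorial k : ℝ) / l ^ (k + 1)) * |F (i + (k+1))|
        ≤ (M * Real.exp (-l)) * (l ^ i / (Nat.factorial i : ℝ)) := by
      intro i
      have hFa : |F (i + (k+1))| = |f (i + (k+1))| *
          (Real.exp (-l) * l ^ (i + (k+1)) / (Nat.factorial (i + (k+1)) : ℝ)) := by
        rw [hF]
        simp only
        rw [abs_mul, abs_of_nonneg (by positivity :
          (0:ℝ) ≤ Real.exp (-l) * l ^ (i + (k+1)) / (Nat.factorial (i + (k+1)) : ℝ))]
      rw [hFa]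
      calc ((Nat.factorial k : ℝ) / l ^ (k + 1)) * (|f (i + (k+1))| *
              (Real.exp (-l) * l ^ (i + (k+1)) / (Nat.factorial (i + (k+1)) : ℝ)))
          ≤ ((Nat.factorial k : ℝ) / l ^ (k + 1)) * (M *
              (Real.exp (-l) * l ^ (i + (k+1)) / (Nat.factorial (i + (k+1)) : ℝ))) := by
            apply mul_le_mul_of_nonneg_left _ (by positivity)
            exact mul_le_mul_of_nonneg_right (hM _) (by positivity)
        _ = (M * Real.exp (-l) * l ^ i) *
              ((Nat.factorial k : ℝ) / (Nat.factorial (i + (k+1)) : ℝ)) := by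
            rw [pow_add]
            have h1 : ((Nat.factorial (i + (k+1)) : ℝ)) ≠ 0 :=
              Nat.cast_ne_zero.2 (Nat.factorial_ne_zero _)
            field_simp
            ring
        _ ≤ (M * Real.exp (-l) * l ^ i) * (1 / (Nat.factorial i : ℝ)) := by
            exact mul_le_mul_of_nonneg_left (fact_div_le k i) (by positivity)
        _ = (M * Real.exp (-l)) * (l ^ i / (Nat.factorial i : ℝ)) := by ring
    have key : ((Nat.factorial k : ℝ) / l ^ (k + 1)) * (∑' i : ℕ, |F (i + (k+1))|) ≤ M := by
      rw [← tsum_mul_left]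
      calc (∑' i : ℕ, ((Nat.factorial k : ℝ) / l ^ (k + 1)) * |F (i + (k+1))|)
          ≤ ∑' i : ℕ, (M * Real.exp (-l)) * (l ^ i / (Nat.factorial i : ℝ)) :=
            Summable.tsum_le_tsum hterm (hsabs.mul_left _)
              ((Real.summable_pow_div_factorial l).mul_left _)
        _ = (M * Real.exp (-l)) * ∑' i : ℕ, l ^ i / (Nat.factorial i : ℝ) := tsum_mul_left
        _ = (M * Real.exp (-l)) * Real.exp l := by rw [← exp_tsum]
        _ = M := by rw [Real.exp_neg]; field_simp
    calc |steinSol l f (k+1)|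
        = ((Nat.factorial k : ℝ) / l ^ (k + 1)) * Real.exp l * |∑' i : ℕ, F (i + (k+1))| :=
          habs
      _ ≤ ((Nat.factorial k : ℝ) / l ^ (k + 1)) * Real.exp l *
            (∑' i : ℕ, |F (i + (k+1))|) := by
          exact mul_le_mul_of_nonneg_left hbound1 (by positivity)
      _ = Real.exp l * (((Nat.factorial k : ℝ) / l ^ (k + 1)) *
            (∑' i : ℕ, |F (i + (k+1))|)) := by ring
      _ ≤ Real.exp l * M := mul_le_mul_of_nonneg_left key (Real.exp_pos l).le

/-- **Chen (1975).** Let `λ > 0` and `f : ℕ → ℝ` be bounded. Then the following are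
equivalent: (i) there is a bounded `g : ℕ → ℝ` with `λ g(k+1) − k g(k) = f(k)` for all `k`;
(ii) `∑_{j≥0} f(j) e^{−λ} λ^j / j! = 0`.  Moreover, if these hold then the explicit function
`steinSol` solves the equation in (i) and satisfies `sup_k |g(k)| ≤ e^λ sup_k |f(k)|`. -/
theorem chen_1975 (l : ℝ) (hl : 0 < l) (f : ℕ → ℝ) (hf : ∃ C, ∀ k, |f k| ≤ C) :
    ((∃ g : ℕ → ℝ, (∃ C, ∀ k, |g k| ≤ C) ∧
        ∀ k : ℕ, l * g (k + 1) - (k : ℝ) * g k = f k) ↔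
      (∑' j : ℕ, f j * (Real.exp (-l) * l ^ j / (Nat.factorial j : ℝ))) = 0) ∧
    ((∑' j : ℕ, f j * (Real.exp (-l) * l ^ j / (Nat.factorial j : ℝ))) = 0 →
      (∀ k : ℕ, l * steinSol l f (k + 1) - (k : ℝ) * steinSol l f k = f k) ∧
      (⨆ k : ℕ, |steinSol l f k|) ≤ Real.exp l * ⨆ k : ℕ, |f k|) := by
  obtain ⟨C, hC⟩ := hf
  have hsum : Summable (fun j : ℕ => f j * (Real.exp (-l) * l ^ j / (Nat.factorial j : ℝ))) :=
    summable_F l f C hC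
  constructor
  · constructor
    · rintro ⟨g, ⟨Cg, hg⟩, heq⟩
      exact forward l hl f g Cg hg heq hsum
    · intro h0
      exact ⟨steinSol l f, ⟨Real.exp l * C, stein_bound l hl f C hC h0⟩, stein_eq l hl f⟩
  · intro h0
    refine ⟨stein_eq l hl f, ?_⟩
    have hbdd : BddAbove (Set.range fun k : ℕ => |f k|) :=
      ⟨C, by rintro _ ⟨k, rfl⟩; exact hC k⟩
    have hM : ∀ k, |f k| ≤ ⨆ k : ℕ, |f k| := fun k => le_ciSup hbdd k
    exact ciSup_le fun k => stein_bound l hl f _ hM h0 k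
end

section
/- (Stein characterization of the Poisson distribution) Let λ > 0 and let Z be a random variable on a probability space taking values in ℕ. Then the law of Z is Poi(λ) if and only if, for every bounded function g : ℕ → ℝ, the random variable λ·g(Z+1) − Z·g(Z) is integrable and E[λ·g(Z+1) − Z·g(Z)] = 0. -/
open MeasureTheory ProbabilityTheory

open scoped Nat

noncomputable def poissonMeasure (l : ℝ) : Measure ℕ :=
  Measure.sum fun k =>
    ENNReal.ofReal (Real.exp (-l) * l ^ k / (Nat.factorial k : ℝ)) • Measure.dirac k

lemma expSumAux (l : ℝ) : HasSum (fun n : ℕ => l ^ n / n !) (Real.exp l) := by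
  rw [Real.exp_eq_exp_ℝ]
  exact NormedSpace.expSeries_div_hasSum_exp l

lemma poisApply (l : ℝ) (n : ℕ) :
    _root_.poissonMeasure l {n} = ENNReal.ofReal (Real.exp (-l) * l ^ n / n !) := by
  simp only [_root_.poissonMeasure]
  rw [Measure.sum_apply _ (measurableSet_singleton n)]
  rw [tsum_eq_single n]
  · simp [Measure.smul_apply, Measure.dirac_apply]
  · intro k hk
    simp [Measure.smul_apply, Measure.dirac_apply, Set.indicator_apply, hk]

lemma keyIdent (l : ℝ) (n : ℕ) :
    ((n : ℝ) + 1) * (Real.exp (-l) * l ^ (n + 1) / (n + 1)!) =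
      l * (Real.exp (-l) * l ^ n / n !) := by
  have h : (((n + 1)! : ℕ) : ℝ) = ((n : ℝ) + 1) * (n ! : ℝ) := by
    push_cast [Nat.factorial_succ]; ring
  have hn : ((n : ℝ) + 1) ≠ 0 := by positivity
  have hf : ((n ! : ℕ) : ℝ) ≠ 0 := by positivity
  rw [h]
  field_simp
  ring

/-- **Stein characterization of the Poisson distribution.** Let `λ > 0` and `Z` be an
`ℕ`-valued random variable.  Then `L(Z) = Poi(λ)` if and only if, for every bounded
`g : ℕ → ℝ`, the random variable `λ g(Z+1) − Z g(Z)` is integrable with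
`E[λ g(Z+1) − Z g(Z)] = 0`. -/
theorem stein_characterization_poisson {Ω : Type*} [MeasurableSpace Ω] (P : Measure Ω)
    [IsProbabilityMeasure P] (l : ℝ) (hl : 0 < l) (Z : Ω → ℕ) (hZ : Measurable Z) :
    Measure.map Z P = poissonMeasure l ↔
      ∀ g : ℕ → ℝ, (∃ C, ∀ k, |g k| ≤ C) →
        Integrable (fun ω => l * g (Z ω + 1) - (Z ω : ℝ) * g (Z ω)) P ∧
        ∫ ω, (l * g (Z ω + 1) - (Z ω : ℝ) * g (Z ω)) ∂P = 0 := by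
  have hZae : AEMeasurable Z P := hZ.aemeasurable
  set p : ℕ → ℝ := fun n => Real.exp (-l) * l ^ n / n ! with hp
  have hp_nonneg : ∀ n, 0 ≤ p n := fun n => by
    simp only [hp]; positivity
  have hp_sum : Summable p := by
    have := (expSumAux l).mul_left (Real.exp (-l))
    exact (this.summable).congr fun n => by simp [hp, mul_div_assoc]
  have hnp_sum : Summable (fun n : ℕ => (n : ℝ) * p n) := by
    apply (summable_nat_add_iff 1).mp
    have h2 : (fun n : ℕ => ((n + 1 : ℕ) : ℝ) * p (n + 1)) = fun n : ℕ => l * p n := by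
      funext n
      simp only [hp]
      push_cast
      exact keyIdent l n
    rw [h2]
    exact hp_sum.mul_left l
  constructor
  · intro hmap g hg
    obtain ⟨C, hC⟩ := hg
    have hC0 : 0 ≤ C := le_trans (abs_nonneg _) (hC 0)
    set F : ℕ → ℝ := fun n => l * g (n + 1) - (n : ℝ) * g n with hF
    have hFm : Measurable F := measurable_from_top
    have hFsm : StronglyMeasurable F := hFm.stronglyMeasurable
    have hsumA : Summable (fun n : ℕ => p n * g (n + 1)) := by
      apply Summable.of_norm_bounded (hp_sum.mul_right C)
      intro n
      rw [norm_mul, Real.norm_eq_abs, Real.norm_eq_abs, abs_of_nonneg (hp_nonneg n)]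
      exact mul_le_mul_of_nonneg_left (hC _) (hp_nonneg n)
    have hsumB : Summable (fun n : ℕ => (n : ℝ) * p n * g n) := by
      apply Summable.of_norm_bounded (hnp_sum.mul_right C)
      intro n
      rw [norm_mul, Real.norm_eq_abs, Real.norm_eq_abs,
        abs_of_nonneg (mul_nonneg (Nat.cast_nonneg n) (hp_nonneg n))]
      exact mul_le_mul_of_nonneg_left (hC _) (mul_nonneg (Nat.cast_nonneg n) (hp_nonneg n))
    have hsumF : Summable (fun n : ℕ => |F n| * p n) := by
      apply Summable.of_nonneg_of_le
        (fun n => mul_nonneg (abs_nonneg _) (hp_nonneg n))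
        (fun n => ?_) (((hp_sum.mul_left (l * C))).add (hnp_sum.mul_left C))
      have h1 : |F n| ≤ l * C + C * n := by
        refine (abs_sub _ _).trans ?_
        gcongr
        · rw [abs_mul, abs_of_nonneg hl.le]
          exact mul_le_mul_of_nonneg_left (hC _) hl.le
        · rw [abs_mul, Nat.abs_cast, mul_comm]
          exact mul_le_mul_of_nonneg_right (hC _) (Nat.cast_nonneg n)
      calc |F n| * p n ≤ (l * C + C * n) * p n :=
            mul_le_mul_of_nonneg_right h1 (hp_nonneg n)
        _ = l * C * p n + C * ((n:ℝ) * p n) := by ring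
    have hintF : Integrable F (_root_.poissonMeasure l) := by
      refine ⟨hFsm.aestronglyMeasurable, ?_⟩
      show (∫⁻ n, (‖F n‖₊ : ENNReal) ∂(_root_.poissonMeasure l)) < ⊤
      rw [lintegral_countable']
      have heq : ∀ n : ℕ, (‖F n‖₊ : ENNReal) * _root_.poissonMeasure l {n}
          = ENNReal.ofReal (|F n| * p n) := by
        intro n
        rw [poisApply, ← enorm_eq_nnnorm, ← ofReal_norm, Real.norm_eq_abs,
          ← ENNReal.ofReal_mul (abs_nonneg _)]
      rw [tsum_congr heq, ← ENNReal.ofReal_tsum_of_nonneg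
        (fun n => mul_nonneg (abs_nonneg _) (hp_nonneg n)) hsumF]
      exact ENNReal.ofReal_lt_top
    have hintP : Integrable (fun ω => F (Z ω)) P :=
      (integrable_map_measure hFsm.aestronglyMeasurable hZae).mp (by rwa [hmap])
    refine ⟨hintP, ?_⟩
    have hI : ∫ ω, F (Z ω) ∂P = ∫ n, F n ∂(_root_.poissonMeasure l) := by
      rw [← hmap, integral_map hZae hFsm.aestronglyMeasurable]
    have hI2 : ∫ n, F n ∂(_root_.poissonMeasure l) = ∑' n, p n * F n := by
      rw [integral_countable' hintF]
      refine tsum_congr fun n => ?_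
      rw [measureReal_def, poisApply, smul_eq_mul, ENNReal.toReal_ofReal (hp_nonneg n)]
    have hsplit : ∑' n, p n * F n
        = l * (∑' n : ℕ, p n * g (n + 1)) - ∑' n : ℕ, (n : ℝ) * p n * g n := by
      have h1 : (fun n : ℕ => p n * F n)
          = fun n : ℕ => l * (p n * g (n + 1)) - (n : ℝ) * p n * g n := by
        funext n; simp only [hF]; ring
      rw [h1, Summable.tsum_sub (hsumA.mul_left l) hsumB, tsum_mul_left]
    have hshift : ∑' n : ℕ, (n : ℝ) * p n * g n = l * ∑' n : ℕ, p n * g (n + 1) := by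
      rw [Summable.tsum_eq_zero_add hsumB]
      simp only [Nat.cast_zero, zero_mul]
      have h2 : (fun n : ℕ => ((n + 1 : ℕ) : ℝ) * p (n + 1) * g (n + 1))
          = fun n : ℕ => l * (p n * g (n + 1)) := by
        funext n
        simp only [hp]
        push_cast
        rw [keyIdent l n]
        ring
      rw [h2, tsum_mul_left, zero_add]
    show ∫ ω, F (Z ω) ∂P = 0
    rw [hI, hI2, hsplit, hshift, sub_self]
  · intro H
    set q : ℕ → ℝ := fun n => (P.map Z {n}).toReal with hq
    have hmapapp : ∀ m : ℕ, P.map Z {m} = P (Z ⁻¹' {m}) := fun m =>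
      Measure.map_apply hZ (measurableSet_singleton m)
    have hrec : ∀ n : ℕ, ((n : ℝ) + 1) * q (n + 1) = l * q n := by
      intro n
      obtain ⟨hint, hzero⟩ := H (fun k => if k = n + 1 then (1 : ℝ) else 0)
        ⟨1, fun k => by by_cases h : k = n + 1 <;> simp [h]⟩
      have heq : (fun ω => l * (if Z ω + 1 = n + 1 then (1:ℝ) else 0)
            - (Z ω : ℝ) * (if Z ω = n + 1 then (1:ℝ) else 0))
          = fun ω => l * (Z ⁻¹' {n}).indicator (fun _ => (1:ℝ)) ω
            - ((n : ℝ) + 1) * (Z ⁻¹' {n + 1}).indicator (fun _ => (1:ℝ)) ω := by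
        funext ω
        by_cases h1 : Z ω = n
        · have h2 : Z ω ≠ n + 1 := by omega
          simp [Set.indicator_apply, h1, h2]
        · by_cases h2 : Z ω = n + 1
          · simp [Set.indicator_apply, h1, h2]
          · simp [Set.indicator_apply, h1, h2]
      have h1 : Integrable ((Z ⁻¹' {n}).indicator (fun _ => (1:ℝ))) P :=
        (integrable_const (1:ℝ)).indicator (hZ (measurableSet_singleton n))
      have h2 : Integrable ((Z ⁻¹' {n+1}).indicator (fun _ => (1:ℝ))) P :=
        (integrable_const (1:ℝ)).indicator (hZ (measurableSet_singleton (n+1)))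
      rw [heq] at hzero
      rw [integral_sub (h1.const_mul l) (h2.const_mul _), integral_const_mul,
        integral_const_mul, integral_indicator_const _ (hZ (measurableSet_singleton n)),
        integral_indicator_const _ (hZ (measurableSet_singleton (n+1)))] at hzero
      simp only [smul_eq_mul, mul_one, measureReal_def] at hzero
      simp only [hq, hmapapp]
      linarith
    have hqf : ∀ n, q n = q 0 * (l ^ n / n !) := by
      intro n
      induction n with
      | zero => simp
      | succ n ih =>
        have hn1 : ((n : ℝ) + 1) ≠ 0 := by positivity
        have h := hrec n
        rw [ih] at h
        have hfac : (((n + 1)! : ℕ) : ℝ) = ((n : ℝ) + 1) * (n ! : ℝ) := by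
          push_cast [Nat.factorial_succ]; ring
        have hf : ((n ! : ℕ) : ℝ) ≠ 0 := by positivity
        have h' : q (n + 1) = l * (q 0 * (l ^ n / (n ! : ℝ))) / ((n : ℝ) + 1) :=
          eq_div_of_mul_eq hn1 (by rw [mul_comm]; exact h)
        rw [h', hfac, pow_succ]
        field_simp
    have hsum1 : ∑' n, q n = 1 := by
      have hms : ∑' n : ℕ, P.map Z {n} = P.map Z Set.univ := by
        rw [← measure_iUnion (fun i j hij => by
          simp [Function.onFun, Set.disjoint_singleton, hij])
          (fun i => measurableSet_singleton i)]
        rw [Set.iUnion_of_singleton]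
      have hprob : IsProbabilityMeasure (P.map Z) := Measure.isProbabilityMeasure_map hZae
      have h3 := ENNReal.tsum_toReal_eq (fun n : ℕ => measure_ne_top (P.map Z) {n})
      rw [hms, measure_univ] at h3
      simpa [hq] using h3.symm
    have hq0 : q 0 = Real.exp (-l) := by
      have h1 : ∑' n, q n = q 0 * Real.exp l := by
        rw [tsum_congr hqf, tsum_mul_left, (expSumAux l).tsum_eq]
      rw [hsum1] at h1
      have h4 : q 0 = (Real.exp l)⁻¹ := by
        have he : Real.exp l ≠ 0 := Real.exp_ne_zero l
        field_simp
        linarith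
      rw [h4, ← Real.exp_neg]
    rw [MeasureTheory.Measure.ext_iff_singleton]
    intro n
    rw [poisApply]
    have h5 : P.map Z {n} = ENNReal.ofReal (q n) := by
      rw [hq, ENNReal.ofReal_toReal (measure_ne_top _ _)]
    rw [h5, hqf n, hq0, mul_div_assoc]
end

section
/- (Le Cam, 1960) Let I_1, …, I_n be independent Bernoulli random variables with P(I_i = 1) = p_i and P(I_i = 0) = 1 − p_i, where 0 < p_i < 1 for each i. Let W = ∑_{i=1}^n I_i and λ = E W = ∑_{i=1}^n p_i. Then d_TV(L(W), Poi(λ)) ≤ ∑_{i=1}^n p_i². -/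
open MeasureTheory ProbabilityTheory

/-- Total variation distance between two measures on `ℕ`:
`d_TV(μ, ν) = sup_{A ⊆ ℕ} |μ(A) − ν(A)|`. -/
noncomputable def tvDist (μ ν : Measure ℕ) : ℝ :=
  ⨆ A : Set ℕ, |(μ A).toReal - (ν A).toReal|

namespace LeCamAux

/-- real pmf of a measure on ℕ -/
noncomputable def pm (μ : Measure ℕ) (k : ℕ) : ℝ := (μ {k}).toReal

/-- Poisson pmf -/
noncomputable def poi (l : ℝ) (k : ℕ) : ℝ := Real.exp (-l) * l ^ k / (Nat.factorial k : ℝ)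

/-- Bernoulli pmf -/
noncomputable def bern (q : ℝ) (k : ℕ) : ℝ := if k = 0 then 1 - q else if k = 1 then q else 0

/-- discrete convolution -/
noncomputable def cnv (f g : ℕ → ℝ) (k : ℕ) : ℝ :=
  ∑ j ∈ Finset.range (k + 1), f j * g (k - j)

lemma pm_nonneg (μ : Measure ℕ) (k : ℕ) : 0 ≤ pm μ k := ENNReal.toReal_nonneg

lemma poi_nonneg {l : ℝ} (hl : 0 ≤ l) (k : ℕ) : 0 ≤ poi l k := by
  unfold poi; positivity

lemma hasSum_poi {l : ℝ} : HasSum (poi l) 1 := by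
  have h : HasSum (fun n : ℕ => l ^ n / (Nat.factorial n : ℝ)) (Real.exp l) := by
    rw [Real.exp_eq_exp_ℝ]
    exact NormedSpace.expSeries_div_hasSum_exp l
  have h2 := h.mul_left (Real.exp (-l))
  have hfun : poi l = fun i => Real.exp (-l) * (l ^ i / (Nat.factorial i : ℝ)) :=
    funext fun i => mul_div_assoc _ _ _
  rw [hfun, show (1 : ℝ) = Real.exp (-l) * Real.exp l by rw [← Real.exp_add]; simp]
  exact h2

lemma summable_poi {l : ℝ} : Summable (poi l) := hasSum_poi.summable

lemma tsum_poi {l : ℝ} : ∑' k, poi l k = 1 := hasSum_poi.tsum_eq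

lemma summable_bern (q : ℝ) : Summable (bern q) := by
  apply summable_of_ne_finset_zero (s := {0, 1})
  intro k hk
  simp only [Finset.mem_insert, Finset.mem_singleton, not_or] at hk
  simp [bern, hk.1, hk.2]

lemma poissonMeasure_apply (l : ℝ) (k : ℕ) :
    _root_.poissonMeasure l {k} = ENNReal.ofReal (poi l k) := by
  rw [_root_.poissonMeasure, Measure.sum_apply _ (measurableSet_singleton k)]
  rw [tsum_eq_single k]
  · simp [Measure.smul_apply, Measure.dirac_apply' _ (measurableSet_singleton k), poi]
  · intro j hj
    simp [Measure.smul_apply, Measure.dirac_apply' _ (measurableSet_singleton k),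
      Set.indicator_of_notMem, hj]

lemma pm_poissonMeasure {l : ℝ} (hl : 0 ≤ l) : pm (_root_.poissonMeasure l) = poi l := by
  funext k
  rw [pm, poissonMeasure_apply, ENNReal.toReal_ofReal (poi_nonneg hl k)]

theorem poissonMeasure_prob {l : ℝ} (hl : 0 ≤ l) :
    IsProbabilityMeasure (_root_.poissonMeasure l) := by
  constructor
  rw [_root_.poissonMeasure, Measure.sum_apply _ MeasurableSet.univ]
  have : ∀ k : ℕ, (ENNReal.ofReal (Real.exp (-l) * l ^ k / (Nat.factorial k : ℝ)) • Measure.dirac k)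
      Set.univ = ENNReal.ofReal (poi l k) := by
    intro k; simp [poi]
  rw [tsum_congr this, ← ENNReal.ofReal_tsum_of_nonneg (poi_nonneg hl) summable_poi,
    tsum_poi, ENNReal.ofReal_one]

lemma measure_singletons_eq (μ : Measure ℕ) (A : Set ℕ) : μ A = ∑' k : A, μ {(k : ℕ)} := by
  conv_lhs => rw [show A = ⋃ k ∈ A, {k} by simp]
  rw [measure_biUnion (Set.to_countable A) ?_ ?_]
  · intro i hi j hj hij
    simp [Function.onFun, Set.disjoint_singleton_left, hij]
  · intro k _; exact measurableSet_singleton k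

/-- mass of a set as a tsum of indicator of pmf -/
lemma toReal_apply_eq_tsum (μ : Measure ℕ) [IsFiniteMeasure μ] (A : Set ℕ) :
    (μ A).toReal = ∑' k, A.indicator (pm μ) k := by
  have h1 := measure_singletons_eq μ A
  rw [measure_singletons_eq μ A, ENNReal.tsum_toReal_eq (fun k => measure_ne_top μ _)]
  exact tsum_subtype A (pm μ)

lemma summable_pm (μ : Measure ℕ) [IsFiniteMeasure μ] : Summable (pm μ) := by
  apply ENNReal.summable_toReal
  rw [← tsum_univ (fun k => μ {k}), ← measure_singletons_eq μ Set.univ]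
  exact measure_ne_top μ _

lemma tsum_pm (μ : Measure ℕ) [IsProbabilityMeasure μ] : ∑' k, pm μ k = 1 := by
  have := toReal_apply_eq_tsum μ Set.univ
  simpa using this.symm

/-- half L1 bound for TV distance on sets -/
lemma abs_sub_le_half {f g : ℕ → ℝ} (hf : Summable f) (hg : Summable g)
    (hf0 : ∀ k, 0 ≤ f k) (hg0 : ∀ k, 0 ≤ g k) (h : ∑' k, f k = ∑' k, g k) (A : Set ℕ) :
    |∑' k, A.indicator f k - ∑' k, A.indicator g k| ≤ (∑' k, |f k - g k|) / 2 := by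
  have habs : Summable fun k => |f k - g k| := (hf.sub hg).abs
  have hif : Summable (A.indicator f) := hf.indicator A
  have hig : Summable (A.indicator g) := hg.indicator A
  have key : ∀ (u v : ℕ → ℝ), Summable u → Summable v → (∀ k, 0 ≤ u k) → (∀ k, 0 ≤ v k) →
      ∑' k, u k = ∑' k, v k →
      ∑' k, A.indicator u k - ∑' k, A.indicator v k ≤ (∑' k, |u k - v k|) / 2 := by
    intro u v hu hv hu0 hv0 huv
    have habs' : Summable fun k => |u k - v k| := (hu.sub hv).abs
    have hle : ∀ k, A.indicator u k - A.indicator v k ≤ (|u k - v k| + (u k - v k)) / 2 := by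
      intro k
      by_cases hk : k ∈ A
      · simp only [Set.indicator_of_mem hk]
        have := le_abs_self (u k - v k); linarith
      · simp only [Set.indicator_of_notMem hk]
        have := abs_nonneg (u k - v k)
        have h2 : -(u k - v k) ≤ |u k - v k| := neg_le_abs _
        linarith
    calc ∑' k, A.indicator u k - ∑' k, A.indicator v k
        = ∑' k, (A.indicator u k - A.indicator v k) := (Summable.tsum_sub (hu.indicator A) (hv.indicator A)).symm
      _ ≤ ∑' k, (|u k - v k| + (u k - v k)) / 2 :=
          Summable.tsum_le_tsum hle ((hu.indicator A).sub (hv.indicator A))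
            ((habs'.add (hu.sub hv)).div_const 2)
      _ = ((∑' k, |u k - v k|) + ((∑' k, u k) - ∑' k, v k)) / 2 := by
          rw [tsum_div_const, Summable.tsum_add habs' (hu.sub hv), Summable.tsum_sub hu hv]
      _ = (∑' k, |u k - v k|) / 2 := by rw [huv]; ring
  have h1 := key f g hf hg hf0 hg0 h
  have h2 := key g f hg hf hg0 hf0 h.symm
  rw [abs_le]
  constructor
  · have : ∀ k, |g k - f k| = |f k - g k| := fun k => abs_sub_comm _ _
    rw [tsum_congr this] at h2
    linarith
  · exact h1

/-- l1 subadditivity of convolution -/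
lemma l1_cnv_le {f f' g g' : ℕ → ℝ}
    (hf : Summable f) (hf' : Summable f') (hg : Summable g) (hg' : Summable g')
    (hf0 : ∀ k, 0 ≤ f k) (hf'0 : ∀ k, 0 ≤ f' k) (hg0 : ∀ k, 0 ≤ g k) (hg'0 : ∀ k, 0 ≤ g' k)
    (hf'1 : ∑' k, f' k = 1) (hg1 : ∑' k, g k = 1) :
    ∑' k, |cnv f g k - cnv f' g' k| ≤ (∑' k, |f k - f' k|) + ∑' k, |g k - g' k| := by
  set u : ℕ → ℝ := fun k => |f k - f' k| with hu
  set v : ℕ → ℝ := fun k => |g k - g' k| with hv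
  have hsu : Summable u := (hf.sub hf').abs
  have hsv : Summable v := (hg.sub hg').abs
  have hnu : ∀ k, ‖u k‖ = u k := fun k => by simp [hu, abs_abs, Real.norm_eq_abs]
  have hnv : ∀ k, ‖v k‖ = v k := fun k => by simp [hv, abs_abs, Real.norm_eq_abs]
  have hng : ∀ k, ‖g k‖ = g k := fun k => by simp [Real.norm_eq_abs, abs_of_nonneg (hg0 k)]
  have hnf' : ∀ k, ‖f' k‖ = f' k := fun k => by simp [Real.norm_eq_abs, abs_of_nonneg (hf'0 k)]
  have hsu' : Summable fun k => ‖u k‖ := by simpa [hnu] using hsu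
  have hsv' : Summable fun k => ‖v k‖ := by simpa [hnv] using hsv
  have hsg' : Summable fun k => ‖g k‖ := by simpa [hng] using hg
  have hsf'' : Summable fun k => ‖f' k‖ := by simpa [hnf'] using hf'
  -- summability of the two convolutions
  have hc1 : Summable (cnv u g) := by
    exact (summable_norm_sum_mul_range_of_summable_norm hsu' hsg').of_norm
  have hc2 : Summable (cnv f' v) := by
    exact (summable_norm_sum_mul_range_of_summable_norm hsf'' hsv').of_norm
  have hpt : ∀ k, |cnv f g k - cnv f' g' k| ≤ cnv u g k + cnv f' v k := by
    intro k
    have : cnv f g k - cnv f' g' k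
        = ∑ j ∈ Finset.range (k + 1), ((f j - f' j) * g (k - j) + f' j * (g (k - j) - g' (k - j))) := by
      rw [cnv, cnv, ← Finset.sum_sub_distrib]
      congr 1; funext j; ring
    rw [this, cnv, cnv, ← Finset.sum_add_distrib]
    refine (Finset.abs_sum_le_sum_abs _ _).trans (Finset.sum_le_sum fun j _ => ?_)
    refine (abs_add_le _ _).trans ?_
    rw [abs_mul, abs_mul, abs_of_nonneg (hg0 _), abs_of_nonneg (hf'0 _)]
  have hcb : Summable fun k => cnv u g k + cnv f' v k := hc1.add hc2
  have hca : Summable fun k => |cnv f g k - cnv f' g' k| :=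
    Summable.of_nonneg_of_le (fun k => abs_nonneg _) hpt hcb
  calc ∑' k, |cnv f g k - cnv f' g' k| ≤ ∑' k, (cnv u g k + cnv f' v k) :=
        Summable.tsum_le_tsum hpt hca hcb
    _ = (∑' k, cnv u g k) + ∑' k, cnv f' v k := Summable.tsum_add hc1 hc2
    _ = (∑' k, u k) * (∑' k, g k) + (∑' k, f' k) * (∑' k, v k) := by
        have e1 := (tsum_mul_tsum_eq_tsum_sum_range_of_summable_norm hsu' hsg').symm
        have e2 := (tsum_mul_tsum_eq_tsum_sum_range_of_summable_norm hsf'' hsv').symm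
        simp only [cnv]
        rw [e1, e2]
    _ = (∑' k, u k) + ∑' k, v k := by rw [hf'1, hg1]; ring

/-- Poisson convolution identity -/
lemma cnv_poi (a b : ℝ) (k : ℕ) : cnv (poi a) (poi b) k = poi (a + b) k := by
  unfold cnv poi
  rw [neg_add, Real.exp_add, add_pow, Finset.mul_sum, Finset.sum_div]
  refine Finset.sum_congr rfl fun j hj => ?_
  have hjk : j ≤ k := Nat.lt_succ_iff.mp (Finset.mem_range.mp hj)
  have hfact : ((k.choose j : ℝ)) * (Nat.factorial j : ℝ) * (Nat.factorial (k - j) : ℝ) = (Nat.factorial k : ℝ) := by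
    exact_mod_cast Nat.choose_mul_factorial_mul_factorial hjk
  have h1 : (Nat.factorial j : ℝ) ≠ 0 := Nat.cast_ne_zero.mpr (Nat.factorial_ne_zero j)
  have h2 : (Nat.factorial (k - j) : ℝ) ≠ 0 := Nat.cast_ne_zero.mpr (Nat.factorial_ne_zero (k - j))
  have h3 : (Nat.factorial k : ℝ) ≠ 0 := Nat.cast_ne_zero.mpr (Nat.factorial_ne_zero k)
  field_simp
  rw [← hfact]
  ring

set_option maxHeartbeats 1000000 in
/-- L1 distance Bernoulli to Poisson -/
lemma l1_bern_poi {q : ℝ} (hq0 : 0 < q) (hq1 : q < 1) :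
    ∑' k, |bern q k - poi q k| ≤ 2 * q ^ 2 := by
  have hd : Summable fun k => |bern q k - poi q k| :=
    ((summable_bern q).sub summable_poi).abs
  have hshift : ∀ k : ℕ, |bern q (k + 2) - poi q (k + 2)| = poi q (k + 2) := by
    intro k
    have : bern q (k + 2) = 0 := by simp [bern]
    rw [this, zero_sub, abs_neg, abs_of_nonneg (poi_nonneg hq0.le _)]
  have e1 : ∑' k, |bern q k - poi q k|
      = |bern q 0 - poi q 0| + (|bern q 1 - poi q 1| + ∑' k, poi q (k + 2)) := by
    rw [Summable.tsum_eq_zero_add hd]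
    congr 1
    rw [Summable.tsum_eq_zero_add (by exact (summable_nat_add_iff 1).mpr hd)]
    congr 1
    exact tsum_congr fun k => hshift k
  have e2 : (1 : ℝ) = poi q 0 + (poi q 1 + ∑' k, poi q (k + 2)) := by
    rw [← tsum_poi (l := q), Summable.tsum_eq_zero_add summable_poi]
    congr 1
    rw [Summable.tsum_eq_zero_add ((summable_nat_add_iff 1).mpr summable_poi)]
  have hexp1 : 1 - q ≤ Real.exp (-q) := by
    have := Real.add_one_le_exp (-q); linarith
  have hexp2 : Real.exp (-q) ≤ 1 := by
    have : Real.exp (-q) ≤ Real.exp 0 := Real.exp_le_exp.mpr (by linarith)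
    simpa using this
  have hp0 : poi q 0 = Real.exp (-q) := by simp [poi]
  have hp1 : poi q 1 = Real.exp (-q) * q := by simp [poi]
  have hb0 : bern q 0 = 1 - q := by simp [bern]
  have hb1 : bern q 1 = q := by simp [bern]
  have ha0 : |bern q 0 - poi q 0| = Real.exp (-q) - (1 - q) := by
    rw [hb0, hp0, abs_of_nonpos (by linarith)]; ring
  have ha1 : |bern q 1 - poi q 1| = q - Real.exp (-q) * q := by
    rw [hb1, hp1, abs_of_nonneg (by nlinarith)]
  have htail : ∑' k, poi q (k + 2) = 1 - poi q 0 - poi q 1 := by linarith [e2]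
  rw [e1, ha0, ha1, htail, hp0, hp1]
  nlinarith [hexp1, hexp2, hq0, hq1]

/-- pmf of sum of independent variables is the convolution of pmfs -/
lemma pm_map_add {Ω : Type*} [MeasurableSpace Ω] (P : Measure Ω) [IsProbabilityMeasure P]
    {X Y : Ω → ℕ} (hX : Measurable X) (hY : Measurable Y)
    (h : IndepFun X Y P) (k : ℕ) :
    pm (Measure.map (fun ω => X ω + Y ω) P) k
      = cnv (pm (Measure.map X P)) (pm (Measure.map Y P)) k := by
  have hXY : Measurable fun ω => X ω + Y ω := hX.add hY
  have hset : (fun ω => X ω + Y ω) ⁻¹' {k}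
      = ⋃ j ∈ Finset.range (k + 1), (X ⁻¹' {j} ∩ Y ⁻¹' {k - j}) := by
    ext ω
    simp only [Set.mem_preimage, Set.mem_singleton_iff, Set.mem_iUnion, Set.mem_inter_iff,
      Finset.mem_range, Nat.lt_succ_iff]
    constructor
    · intro hw; exact ⟨X ω, by omega, rfl, by omega⟩
    · rintro ⟨j, hj, hXj, hYj⟩; omega
  have hdisj : (↑(Finset.range (k + 1)) : Set ℕ).PairwiseDisjoint
      (fun j => X ⁻¹' {j} ∩ Y ⁻¹' {k - j}) := by
    intro i _ j _ hij
    rw [Function.onFun, Set.disjoint_left]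
    rintro ω ⟨h1, _⟩ ⟨h2, _⟩
    exact hij ((Set.mem_singleton_iff.mp h1).symm.trans (Set.mem_singleton_iff.mp h2))
  have hmeasset : ∀ j ∈ Finset.range (k + 1),
      MeasurableSet (X ⁻¹' {j} ∩ Y ⁻¹' {k - j}) := fun j _ =>
    (hX (measurableSet_singleton j)).inter (hY (measurableSet_singleton (k - j)))
  rw [pm, Measure.map_apply hXY (measurableSet_singleton k), hset,
    measure_biUnion_finset hdisj hmeasset]
  have hterm : ∀ j ∈ Finset.range (k + 1),
      P (X ⁻¹' {j} ∩ Y ⁻¹' {k - j}) = P (X ⁻¹' {j}) * P (Y ⁻¹' {k - j}) := fun j _ =>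
    h.measure_inter_preimage_eq_mul _ _ (measurableSet_singleton j)
      (measurableSet_singleton (k - j))
  rw [Finset.sum_congr rfl hterm, ENNReal.toReal_sum
    (fun j _ => ENNReal.mul_ne_top (measure_ne_top P _) (measure_ne_top P _))]
  simp only [cnv, pm]
  refine Finset.sum_congr rfl fun j _ => ?_
  rw [ENNReal.toReal_mul, Measure.map_apply hX (measurableSet_singleton j),
    Measure.map_apply hY (measurableSet_singleton (k - j))]

/-- law of a Bernoulli variable -/
lemma pm_bernoulli {Ω : Type*} [MeasurableSpace Ω] (P : Measure Ω) [IsProbabilityMeasure P]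
    {X : Ω → ℕ} (hX : Measurable X) {q : ℝ} (hq0 : 0 < q) (hq1 : q < 1)
    (h1 : P {ω | X ω = 1} = ENNReal.ofReal q)
    (h0 : P {ω | X ω = 0} = ENNReal.ofReal (1 - q)) :
    pm (Measure.map X P) = bern q := by
  funext k
  have hpre : ∀ m : ℕ, X ⁻¹' {m} = {ω | X ω = m} := fun m => rfl
  rw [pm, Measure.map_apply hX (measurableSet_singleton k), hpre]
  match k with
  | 0 => rw [h0, ENNReal.toReal_ofReal (by linarith)]; simp [bern]
  | 1 => rw [h1, ENNReal.toReal_ofReal hq0.le]; simp [bern]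
  | (m+2) =>
    have hmeas2 : MeasurableSet ({ω | X ω = 0} ∪ {ω | X ω = 1}) :=
      (hX (measurableSet_singleton 0)).union (hX (measurableSet_singleton 1))
    have hdisj : Disjoint {ω | X ω = 0} {ω | X ω = 1} := by
      rw [Set.disjoint_left]; rintro ω h0' h1'
      simp only [Set.mem_setOf_eq] at h0' h1'; omega
    have hm1 : MeasurableSet {ω | X ω = 1} := hX (measurableSet_singleton 1)
    have hcup : P ({ω | X ω = 0} ∪ {ω | X ω = 1}) = 1 := by
      rw [measure_union hdisj hm1, h0, h1,
        ← ENNReal.ofReal_add (by linarith) (by linarith)]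
      norm_num
    have hcompl : P (({ω | X ω = 0} ∪ {ω | X ω = 1})ᶜ) = 0 := by
      rw [measure_compl hmeas2 (measure_ne_top P _), measure_univ, hcup, tsub_self]
    have hz : P {ω | X ω = m + 2} = 0 := by
      refine measure_mono_null ?_ hcompl
      intro ω hω
      simp only [Set.mem_setOf_eq] at hω
      simp only [Set.mem_compl_iff, Set.mem_union, Set.mem_setOf_eq]
      omega
    rw [hz]; simp [bern]

end LeCamAux

open LeCamAux in
/-- **Le Cam (1960).** If `I₁, …, Iₙ` are independent Bernoulli random variables with
`P(Iᵢ = 1) = pᵢ` and `P(Iᵢ = 0) = 1 - pᵢ`, `0 < pᵢ < 1`, `W = ∑ᵢ Iᵢ` and `λ = ∑ᵢ pᵢ`, then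
`d_TV(L(W), Poi(λ)) ≤ ∑ᵢ pᵢ²`. -/
theorem le_cam {Ω : Type*} [MeasurableSpace Ω] (P : Measure Ω) [IsProbabilityMeasure P]
    (n : ℕ) (I : Fin n → Ω → ℕ) (p : Fin n → ℝ)
    (hmeas : ∀ i, Measurable (I i))
    (hp : ∀ i, 0 < p i ∧ p i < 1)
    (h1 : ∀ i, P {ω | I i ω = 1} = ENNReal.ofReal (p i))
    (h0 : ∀ i, P {ω | I i ω = 0} = ENNReal.ofReal (1 - p i))
    (hindep : iIndepFun I P) :
    tvDist (Measure.map (fun ω => ∑ i, I i ω) P) (poissonMeasure (∑ i, p i)) ≤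
      ∑ i, (p i) ^ 2 := by
  classical
  have hlnn : ∀ s : Finset (Fin n), (0:ℝ) ≤ ∑ i ∈ s, p i :=
    fun s => Finset.sum_nonneg fun i _ => (hp i).1.le
  have key : ∀ s : Finset (Fin n),
      ∑' k, |pm (Measure.map (fun ω => ∑ i ∈ s, I i ω) P) k
        - poi (∑ i ∈ s, p i) k| ≤ ∑ i ∈ s, 2 * p i ^ 2 := by
    intro s
    induction s using Finset.induction_on with
    | empty =>
      have hmap : Measure.map (fun ω : Ω => ∑ i ∈ (∅ : Finset (Fin n)), I i ω) P
          = Measure.dirac 0 := by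
        simp only [Finset.sum_empty]
        rw [Measure.map_const, measure_univ, one_smul]
      rw [hmap]
      have hz : ∀ k, |pm (Measure.dirac 0) k
          - poi (∑ i ∈ (∅ : Finset (Fin n)), p i) k| = 0 := by
        intro k
        rw [Finset.sum_empty]
        have hd : pm (Measure.dirac (0:ℕ)) k = if k = 0 then 1 else 0 := by
          rw [pm, Measure.dirac_apply' _ (measurableSet_singleton k)]
          rcases k with _ | m <;> simp
        have hpoi : poi 0 k = if k = 0 then 1 else 0 := by
          rcases k with _ | m <;> simp [poi]
        rw [hd, hpoi, sub_self, abs_zero]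
      rw [tsum_congr hz]
      simp
    | @insert j s hj ih =>
      have hS : Measurable fun ω => ∑ i ∈ s, I i ω :=
        Finset.measurable_sum s fun i _ => hmeas i
      haveI : IsProbabilityMeasure (Measure.map (fun ω => ∑ i ∈ s, I i ω) P) :=
        Measure.isProbabilityMeasure_map hS.aemeasurable
      haveI : IsProbabilityMeasure (Measure.map (I j) P) :=
        Measure.isProbabilityMeasure_map (hmeas j).aemeasurable
      have hind : IndepFun (I j) (fun ω => ∑ i ∈ s, I i ω) P := by
        have h := hindep.indepFun_finsetSum_of_notMem hmeas hj
        have hfs : (∑ i ∈ s, I i) = fun ω => ∑ i ∈ s, I i ω := by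
          funext ω; simp [Finset.sum_apply]
        exact (hfs ▸ h).symm
      have hfun : (fun ω => ∑ i ∈ insert j s, I i ω)
          = fun ω => I j ω + ∑ i ∈ s, I i ω := by
        funext ω; rw [Finset.sum_insert hj]
      have hconv : ∀ k, pm (Measure.map (fun ω => ∑ i ∈ insert j s, I i ω) P) k
          = cnv (pm (Measure.map (I j) P)) (pm (Measure.map (fun ω => ∑ i ∈ s, I i ω) P)) k := by
        intro k
        rw [hfun]
        exact pm_map_add P (hmeas j) hS hind k
      have hpoi : ∀ k, poi (∑ i ∈ insert j s, p i) k
          = cnv (poi (p j)) (poi (∑ i ∈ s, p i)) k := by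
        intro k
        rw [Finset.sum_insert hj, ← cnv_poi]
      have hstep : ∀ k, |pm (Measure.map (fun ω => ∑ i ∈ insert j s, I i ω) P) k
          - poi (∑ i ∈ insert j s, p i) k|
          = |cnv (pm (Measure.map (I j) P)) (pm (Measure.map (fun ω => ∑ i ∈ s, I i ω) P)) k
            - cnv (poi (p j)) (poi (∑ i ∈ s, p i)) k| := by
        intro k; rw [hconv, hpoi]
      rw [tsum_congr hstep, Finset.sum_insert hj]
      have hbern : pm (Measure.map (I j) P) = bern (p j) :=
        pm_bernoulli P (hmeas j) (hp j).1 (hp j).2 (h1 j) (h0 j)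
      have hsub := l1_cnv_le (f := pm (Measure.map (I j) P)) (f' := poi (p j))
        (g := pm (Measure.map (fun ω => ∑ i ∈ s, I i ω) P)) (g' := poi (∑ i ∈ s, p i))
        (summable_pm _) summable_poi (summable_pm _) summable_poi
        (pm_nonneg _) (poi_nonneg (hp j).1.le) (pm_nonneg _) (poi_nonneg (hlnn s))
        tsum_poi (tsum_pm _)
      refine hsub.trans ?_
      have hb : ∑' k, |pm (Measure.map (I j) P) k - poi (p j) k| ≤ 2 * p j ^ 2 := by
        rw [hbern]
        exact l1_bern_poi (hp j).1 (hp j).2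
      linarith [ih]
  -- final assembly
  have hW : Measurable fun ω => ∑ i, I i ω := Finset.measurable_sum _ fun i _ => hmeas i
  haveI : IsProbabilityMeasure (Measure.map (fun ω => ∑ i, I i ω) P) :=
    Measure.isProbabilityMeasure_map hW.aemeasurable
  haveI : IsProbabilityMeasure (_root_.poissonMeasure (∑ i, p i)) :=
    poissonMeasure_prob (hlnn Finset.univ)
  set μ := Measure.map (fun ω => ∑ i, I i ω) P with hμ
  set ν := _root_.poissonMeasure (∑ i, p i) with hν
  have hpmν : pm ν = poi (∑ i, p i) := pm_poissonMeasure (hlnn Finset.univ)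
  have hkey : ∑' k, |pm μ k - pm ν k| ≤ ∑ i, 2 * p i ^ 2 := by
    rw [hpmν]
    exact key Finset.univ
  rw [tvDist]
  refine Real.iSup_le (fun A => ?_) (by positivity)
  rw [toReal_apply_eq_tsum μ A, toReal_apply_eq_tsum ν A]
  refine (abs_sub_le_half (summable_pm μ) (summable_pm ν) (pm_nonneg μ) (pm_nonneg ν)
    ((tsum_pm μ).trans (tsum_pm ν).symm) A).trans ?_
  have h2 : ∑ i, 2 * p i ^ 2 = 2 * ∑ i, p i ^ 2 := by
    rw [Finset.mul_sum]
  linarith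
end

section
/- (Fréchet approximation for maxima of Pareto variables) For each integer n ≥ 1, let X_1, …, X_n be i.i.d. Pareto random variables with shape parameter α > 0 and scale parameter φ > 0, i.e. P(X_1 ≤ y) = 1 − (φ/y)^α for y ≥ φ and 0 for y < φ. Then for all x > 0, | P( X_(n) ≤ φ n^{1/α} x ) − exp(−x^{−α}) | ≤ (log n)/n + 1/n. -/
open MeasureTheory ProbabilityTheory

section FrechetAux
open Real

lemma aux_pow_sub_pow (a b : ℝ) (hb : 0 ≤ b) (hba : b ≤ a) :
    ∀ n : ℕ, a ^ (n + 1) - b ^ (n + 1) ≤ (n + 1) * (a - b) * a ^ n := by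
  intro n
  induction n with
  | zero => norm_num
  | succ m ih =>
    have ha : 0 ≤ a := hb.trans hba
    have hpow : b ^ (m + 1) ≤ a ^ (m + 1) := pow_le_pow_left₀ hb hba _
    have hap : 0 ≤ a ^ (m + 1) := pow_nonneg ha _
    have h2 : a * (a ^ (m + 1) - b ^ (m + 1)) ≤ a * (((m : ℝ) + 1) * (a - b) * a ^ m) :=
      mul_le_mul_of_nonneg_left ih ha
    have hps : a ^ (m + 1) = a * a ^ m := by ring
    have hps2 : a ^ (m + 1 + 1) = a * a ^ (m + 1) := by ring
    have hps3 : b ^ (m + 1 + 1) = b * b ^ (m + 1) := by ring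
    have h3 : (a - b) * b ^ (m + 1) ≤ (a - b) * a ^ (m + 1) :=
      mul_le_mul_of_nonneg_left hpow (sub_nonneg.2 hba)
    push_cast
    calc a ^ (m + 1 + 1) - b ^ (m + 1 + 1)
        = a * (a ^ (m + 1) - b ^ (m + 1)) + (a - b) * b ^ (m + 1) := by ring
      _ ≤ a * (((m : ℝ) + 1) * (a - b) * a ^ m) + (a - b) * a ^ (m + 1) := add_le_add h2 h3
      _ = ((m : ℝ) + 1 + 1) * (a - b) * a ^ (m + 1) := by rw [hps]; ring

lemma aux_exp_neg_sub (s : ℝ) (hs : 0 ≤ s) : Real.exp (-s) - (1 - s) ≤ s ^ 2 := by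
  have h1 : 1 + s ≤ Real.exp s := by linarith [Real.add_one_le_exp s]
  have h2 : Real.exp (-s) * Real.exp s = 1 := by rw [← Real.exp_add]; simp
  nlinarith [Real.exp_pos (-s), Real.exp_pos s]

lemma aux_sq_exp (t : ℝ) (ht : 0 ≤ t) : t ^ 2 * Real.exp (-t) ≤ 4 * Real.exp (-2 : ℝ) := by
  have h1 : t / 2 ≤ Real.exp ((t - 2) / 2) := by linarith [Real.add_one_le_exp ((t - 2) / 2)]
  have h2 : Real.exp ((t - 2) / 2) ^ 2 = Real.exp (t - 2) := by
    rw [sq, ← Real.exp_add]; ring_nf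
  have h3 : t ^ 2 / 4 ≤ Real.exp (t - 2) := by
    rw [← h2]
    nlinarith [Real.exp_pos ((t - 2) / 2)]
  have h4 : Real.exp (t - 2) = Real.exp t * Real.exp (-2 : ℝ) := by rw [← Real.exp_add]; ring_nf
  have h5 : Real.exp (-t) * Real.exp t = 1 := by rw [← Real.exp_add]; simp
  nlinarith [Real.exp_pos (-t), Real.exp_pos t]

lemma aux_const : 4 * Real.exp (-2 : ℝ) * Real.exp (1/2 : ℝ) ≤ 1 := by
  have h2 : Real.exp (1/2 : ℝ) ^ 2 = Real.exp 1 := by rw [sq, ← Real.exp_add]; norm_num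
  have h3 : Real.exp (-2 : ℝ) * (Real.exp 1 * Real.exp 1) = 1 := by
    rw [← Real.exp_add, ← Real.exp_add]; norm_num
  have he1 : (2.7182818283 : ℝ) < Real.exp 1 := Real.exp_one_gt_d9
  have he2 : Real.exp 1 < 2.7182818286 := Real.exp_one_lt_d9
  have hu : (0:ℝ) < Real.exp (1/2 : ℝ) := Real.exp_pos _
  have hup : Real.exp (1/2 : ℝ) < 1.65 := by nlinarith
  nlinarith [Real.exp_pos (-2 : ℝ)]

lemma aux_exp_small (n : ℕ) (hn : 1 ≤ n) (t : ℝ) (ht : (n : ℝ) / 2 ≤ t) :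
    Real.exp (-t) ≤ 1 / n := by
  have hnR : (0:ℝ) < n := by exact_mod_cast hn
  have h1 : (n : ℝ) / 2 ≤ Real.exp ((n : ℝ) / 2 - 1) := by
    linarith [Real.add_one_le_exp ((n : ℝ) / 2 - 1)]
  have h2 : Real.exp ((n : ℝ) / 2 - 1) * Real.exp 1 = Real.exp ((n : ℝ) / 2) := by
    rw [← Real.exp_add]; ring_nf
  have h3 : (2 : ℝ) ≤ Real.exp 1 := by linarith [Real.add_one_le_exp (1:ℝ)]
  have h4 : (n : ℝ) ≤ Real.exp ((n : ℝ) / 2) := by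
    nlinarith [Real.exp_pos ((n : ℝ) / 2 - 1)]
  have h5 : Real.exp (-t) ≤ Real.exp (-((n : ℝ) / 2)) := Real.exp_le_exp.2 (by linarith)
  have h6 : Real.exp (-((n : ℝ) / 2)) * Real.exp ((n : ℝ) / 2) = 1 := by
    rw [← Real.exp_add]; simp
  have h7 : Real.exp (-((n : ℝ) / 2)) ≤ 1 / n := by
    rw [le_div_iff₀ hnR]
    nlinarith [Real.exp_pos (-((n : ℝ) / 2))]
  linarith

lemma aux_main (n : ℕ) (hn : 1 ≤ n) (t : ℝ) (ht : 0 < t) (htn : t ≤ n) :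
    |(1 - t / n) ^ n - Real.exp (-t)| ≤ 1 / n := by
  have hnR : (0:ℝ) < n := by exact_mod_cast hn
  have hs1 : t / n ≤ 1 := by rw [div_le_one hnR]; exact htn
  have hb0 : (0:ℝ) ≤ 1 - t / n := by linarith
  have hab : 1 - t / n ≤ Real.exp (-(t / n)) := by
    linarith [Real.add_one_le_exp (-(t / n))]
  have hexp : Real.exp (-(t / n)) ^ n = Real.exp (-t) := by
    rw [← Real.exp_nat_mul]; congr 1; field_simp
  have hle : (1 - t / n) ^ n ≤ Real.exp (-t) := by
    calc (1 - t / n) ^ n ≤ Real.exp (-(t / n)) ^ n := pow_le_pow_left₀ hb0 hab n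
      _ = Real.exp (-t) := hexp
  rw [abs_sub_comm, abs_of_nonneg (by linarith)]
  rcases le_or_gt t ((n : ℝ) / 2) with hc | hc
  · -- small t
    obtain ⟨m, rfl⟩ : ∃ m, n = m + 1 := ⟨n - 1, by omega⟩
    have hNm : ((m + 1 : ℕ) : ℝ) = (m : ℝ) + 1 := by push_cast; ring
    set N : ℝ := ((m + 1 : ℕ) : ℝ) with hN
    have key := aux_pow_sub_pow (Real.exp (-(t / N))) (1 - t / N) hb0 hab m
    have hd : Real.exp (-(t / N)) - (1 - t / N) ≤ (t / N) ^ 2 :=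
      aux_exp_neg_sub (t / N) (by positivity)
    have ham : Real.exp (-(t / N)) ^ m = Real.exp (-t) * Real.exp (t / N) := by
      have h := hexp
      rw [pow_succ] at h
      rw [← h, Real.exp_neg]
      field_simp
    have hen : Real.exp (t / N) ≤ Real.exp (1 / 2 : ℝ) := by
      apply Real.exp_le_exp.2
      rw [div_le_div_iff₀ hnR (by norm_num : (0:ℝ) < 2)]
      linarith
    have hpm : (0:ℝ) ≤ Real.exp (-(t / N)) ^ m := pow_nonneg (Real.exp_pos _).le m
    have step : ((m : ℝ) + 1) * (Real.exp (-(t / N)) - (1 - t / N)) * Real.exp (-(t / N)) ^ m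
        ≤ N * (t / N) ^ 2 * (Real.exp (-t) * Real.exp (1 / 2 : ℝ)) := by
      rw [ham, ← hNm]
      have h1 : Real.exp (-(t / N)) - (1 - t / N) ≤ (t / N) ^ 2 := hd
      have h2 : Real.exp (-t) * Real.exp (t / N) ≤ Real.exp (-t) * Real.exp (1 / 2 : ℝ) :=
        mul_le_mul_of_nonneg_left hen (Real.exp_pos _).le
      have hd0 : 0 ≤ Real.exp (-(t / N)) - (1 - t / N) := by linarith
      calc N * (Real.exp (-(t / N)) - (1 - t / N)) * (Real.exp (-t) * Real.exp (t / N))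
          ≤ N * (t / N) ^ 2 * (Real.exp (-t) * Real.exp (t / N)) := by
            apply mul_le_mul_of_nonneg_right _ (by positivity)
            exact mul_le_mul_of_nonneg_left h1 hnR.le
        _ ≤ N * (t / N) ^ 2 * (Real.exp (-t) * Real.exp (1 / 2 : ℝ)) := by
            apply mul_le_mul_of_nonneg_left h2 (by positivity)
    have simp1 : N * (t / N) ^ 2 * (Real.exp (-t) * Real.exp (1 / 2 : ℝ))
        = (t ^ 2 * Real.exp (-t)) * Real.exp (1 / 2 : ℝ) / N := by
      field_simp
    have bound : (t ^ 2 * Real.exp (-t)) * Real.exp (1 / 2 : ℝ) / N ≤ 1 / N := by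
      gcongr
      calc (t ^ 2 * Real.exp (-t)) * Real.exp (1 / 2 : ℝ)
          ≤ (4 * Real.exp (-2 : ℝ)) * Real.exp (1 / 2 : ℝ) :=
            mul_le_mul_of_nonneg_right (aux_sq_exp t ht.le) (Real.exp_pos _).le
        _ ≤ 1 := aux_const
    calc Real.exp (-t) - (1 - t / N) ^ (m + 1)
        = Real.exp (-(t / N)) ^ (m + 1) - (1 - t / N) ^ (m + 1) := by rw [hexp]
      _ ≤ ((m : ℝ) + 1) * (Real.exp (-(t / N)) - (1 - t / N)) * Real.exp (-(t / N)) ^ m := key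
      _ ≤ N * (t / N) ^ 2 * (Real.exp (-t) * Real.exp (1 / 2 : ℝ)) := step
      _ = (t ^ 2 * Real.exp (-t)) * Real.exp (1 / 2 : ℝ) / N := simp1
      _ ≤ 1 / N := bound
  · -- large t
    have := aux_exp_small n hn t hc.le
    have hb : 0 ≤ (1 - t / n) ^ n := pow_nonneg hb0 n
    linarith

end FrechetAux

/-- **Fréchet approximation for maxima of Pareto variables.** If `X₁, …, Xₙ` are i.i.d.
Pareto random variables with shape `α > 0` and scale `φ > 0`, then for all `x > 0`,
`|P(X₍ₙ₎ ≤ φ n^{1/α} x) − exp(−x^{−α})| ≤ (log n)/n + 1/n`. -/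
theorem frechet_approx_max_pareto {Ω : Type*} [MeasurableSpace Ω] (P : Measure Ω)
    [IsProbabilityMeasure P] (n : ℕ) (hn : 1 ≤ n) (α φ : ℝ) (hα : 0 < α) (hφ : 0 < φ)
    (X : Fin n → Ω → ℝ)
    (hmeas : ∀ i, Measurable (X i))
    (hcdf : ∀ i y, P {ω | X i ω ≤ y} =
      ENNReal.ofReal (if φ ≤ y then 1 - (φ / y) ^ α else 0))
    (hindep : iIndepFun X P) :
    ∀ x : ℝ, 0 < x →
      |(P {ω | ∀ i, X i ω ≤ φ * (n : ℝ) ^ (1 / α) * x}).toReal - Real.exp (-x ^ (-α))|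
        ≤ Real.log n / n + 1 / n := by
  intro x hx
  have hnR : (0:ℝ) < n := by exact_mod_cast hn
  have hα' : α ≠ 0 := ne_of_gt hα
  set r : ℝ := (n : ℝ) ^ (1 / α) with hr
  have hrpos : 0 < r := Real.rpow_pos_of_pos hnR _
  set y : ℝ := φ * r * x with hy
  have hypos : 0 < y := by positivity
  set t : ℝ := x ^ (-α) with htdef
  have htpos : 0 < t := Real.rpow_pos_of_pos hx _
  have hxα : (0:ℝ) < x ^ α := Real.rpow_pos_of_pos hx α
  have hrα : r ^ α = (n : ℝ) := by
    rw [hr, ← Real.rpow_mul hnR.le]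
    rw [one_div_mul_cancel hα', Real.rpow_one]
  have hpow : (r * x) ^ α = (n : ℝ) * x ^ α := by
    rw [Real.mul_rpow hrpos.le hx.le, hrα]
  have htinv : t * x ^ α = 1 := by
    rw [htdef, ← Real.rpow_add hx]; norm_num
  have hcond : φ ≤ y ↔ t ≤ n := by
    constructor
    · intro h
      have h0 : φ * 1 ≤ φ * (r * x) := by rw [hy] at h; linarith [h]
      have h1 : 1 ≤ r * x := le_of_mul_le_mul_left h0 hφ
      have h2 : (1:ℝ) ^ α ≤ (r * x) ^ α := Real.rpow_le_rpow (by norm_num) h1 hα.le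
      rw [Real.one_rpow, hpow] at h2
      nlinarith
    · intro h
      have h2 : 1 ≤ (n : ℝ) * x ^ α := by nlinarith
      have h1 : 1 ≤ r * x := by
        by_contra hcon
        push_neg at hcon
        have := Real.rpow_lt_one (by positivity) hcon hα
        rw [hpow] at this
        linarith
      rw [hy]
      nlinarith
  have hfrac : φ ≤ y → (φ / y) ^ α = t / n := by
    intro h
    have h1 : φ / y = (r * x)⁻¹ := by
      rw [hy]; field_simp
    have ht' : t = (x ^ α)⁻¹ := eq_inv_of_mul_eq_one_left htinv
    rw [h1, Real.inv_rpow (by positivity : (0:ℝ) ≤ r * x), hpow, mul_inv, ← ht']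
    ring
  have hset : {ω | ∀ i, X i ω ≤ y} = ⋂ i, X i ⁻¹' Set.Iic y := by
    ext ω; simp [Set.mem_iInter]
  have hPy : P {ω | ∀ i, X i ω ≤ y}
      = ENNReal.ofReal (if φ ≤ y then 1 - (φ / y) ^ α else 0) ^ n := by
    rw [hset, hindep.meas_iInter (fun i => ⟨Set.Iic y, measurableSet_Iic, rfl⟩)]
    have heq : ∀ i : Fin n, P (X i ⁻¹' Set.Iic y)
        = ENNReal.ofReal (if φ ≤ y then 1 - (φ / y) ^ α else 0) := fun i => hcdf i y
    simp [heq, Finset.prod_const, Finset.card_univ]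
  have hc0 : 0 ≤ (if φ ≤ y then 1 - (φ / y) ^ α else 0 : ℝ) := by
    split_ifs with h
    · rw [hfrac h, sub_nonneg, div_le_one hnR]
      exact hcond.1 h
    · exact le_refl 0
  rw [hPy, ← ENNReal.ofReal_pow hc0, ENNReal.toReal_ofReal (pow_nonneg hc0 n)]
  have hlog : 0 ≤ Real.log n / n :=
    div_nonneg (Real.log_nonneg (by exact_mod_cast hn)) hnR.le
  have main : |(if φ ≤ y then 1 - (φ / y) ^ α else 0 : ℝ) ^ n - Real.exp (-t)| ≤ 1 / n := by
    split_ifs with h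
    · rw [hfrac h]
      exact aux_main n hn t htpos (hcond.1 h)
    · have htn : (n : ℝ) < t := lt_of_not_ge (fun hh => h (hcond.2 hh))
      rw [zero_pow (by omega : n ≠ 0), zero_sub, abs_neg,
        abs_of_nonneg (Real.exp_pos _).le]
      exact aux_exp_small n hn t (by linarith)
  linarith [main]
end

section
/- (Weibull approximation for maxima of uniform variables) For each integer n ≥ 1, let X_1, …, X_n be i.i.d. uniform random variables on [a, b), where a < b are reals, and let α > 0. Then for all x < 0, | P( X_(n) ≤ −(−x)^α (b − a)/n + b ) − exp(−(−x)^α) | ≤ (log n)/n + 1/n. -/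
open MeasureTheory ProbabilityTheory

set_option maxHeartbeats 1000000 in
/-- **Weibull approximation for maxima of uniform variables.** If `X₁, …, Xₙ` are i.i.d.
uniform random variables on `[a, b)` with `a < b`, and `α > 0`, then for all `x < 0`,
`|P(X₍ₙ₎ ≤ −(−x)^α (b−a)/n + b) − exp(−(−x)^α)| ≤ (log n)/n + 1/n`. -/
theorem weibull_approx_max_uniform {Ω : Type*} [MeasurableSpace Ω] (P : Measure Ω)
    [IsProbabilityMeasure P] (n : ℕ) (hn : 1 ≤ n) (a b : ℝ) (hab : a < b) (α : ℝ) (hα : 0 < α)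
    (X : Fin n → Ω → ℝ)
    (hmeas : ∀ i, Measurable (X i))
    (hcdf : ∀ i y, P {ω | X i ω ≤ y} =
      ENNReal.ofReal (if y < a then 0 else if y < b then (y - a) / (b - a) else 1))
    (hindep : iIndepFun X P) :
    ∀ x : ℝ, x < 0 →
      |(P {ω | ∀ i, X i ω ≤ -(-x) ^ α * (b - a) / n + b}).toReal - Real.exp (-(-x) ^ α)|
        ≤ Real.log n / n + 1 / n := by
  intro x hx
  have hn0 : (0:ℝ) < n := by exact_mod_cast hn
  set c : ℝ := (-x) ^ α with hc_def
  have hc : 0 < c := Real.rpow_pos_of_pos (by linarith) α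
  clear_value c
  set y : ℝ := -c * (b - a) / n + b with hy_def
  clear_value y
  set i₀ : Fin n := ⟨0, hn⟩ with hi₀
  have hlogn : 0 ≤ Real.log n := Real.log_natCast_nonneg n
  -- compute the probability of the intersection
  have hset : {ω | ∀ i, X i ω ≤ y} = ⋂ i, X i ⁻¹' Set.Iic y := by
    ext ω; simp [Set.mem_iInter]
  have hprod : P {ω | ∀ i, X i ω ≤ y} = (P {ω | X i₀ ω ≤ y}) ^ n := by
    rw [hset, hindep.meas_iInter (fun i => ⟨Set.Iic y, measurableSet_Iic, rfl⟩)]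
    have h : ∀ i : Fin n, P (X i ⁻¹' Set.Iic y) = P {ω | X i₀ ω ≤ y} := by
      intro i
      have h1 : P (X i ⁻¹' Set.Iic y) = P {ω | X i ω ≤ y} := rfl
      rw [h1, hcdf i y, hcdf i₀ y]
    simp only [h]
    simp
  have hyb : y < b := by
    have h : -c * (b - a) / n < 0 := by
      apply div_neg_of_neg_of_pos _ hn0
      nlinarith
    rw [hy_def]; linarith
  rcases le_or_gt c n with hcn | hcn
  · -- main case : c ≤ n
    set t : ℝ := c / n with ht_def
    have ht0 : 0 < t := div_pos hc hn0
    have ht1 : t ≤ 1 := (div_le_one hn0).mpr hcn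
    have htn : (n:ℝ) * t = c := by rw [ht_def]; field_simp
    clear_value t
    have hya : a ≤ y := by
      have h1 : c * (b - a) / n ≤ b - a := by
        rw [div_le_iff₀ hn0]
        nlinarith
      have h2 : -c * (b - a) / (n:ℝ) = -(c * (b - a) / n) := by ring
      rw [hy_def, h2]; linarith
    have hq : (y - a) / (b - a) = 1 - t := by
      have hba : (b : ℝ) - a ≠ 0 := by linarith
      have h2 : y - a = (b - a) * (1 - t) := by
        rw [hy_def]
        have : t = c / n := ht_def
        field_simp [this]
        rw [← htn]; ring
      rw [h2, mul_div_assoc, mul_comm]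
      field_simp
    have hPy : P {ω | X i₀ ω ≤ y} = ENNReal.ofReal (1 - t) := by
      rw [hcdf i₀ y, if_neg (not_lt.mpr hya), if_pos hyb, hq]
    have h1t : 0 ≤ 1 - t := by linarith
    have htoReal : (P {ω | ∀ i, X i ω ≤ y}).toReal = (1 - t) ^ n := by
      rw [hprod, hPy, ← ENNReal.ofReal_pow h1t, ENNReal.toReal_ofReal (by positivity)]
    rw [htoReal]
    -- upper bound : (1-t)^n ≤ exp (-c)
    have hup : (1 - t) ^ n ≤ Real.exp (-c) := by
      have h1 : 1 - t ≤ Real.exp (-t) := by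
        have := Real.add_one_le_exp (-t); linarith
      calc (1 - t) ^ n ≤ (Real.exp (-t)) ^ n := pow_le_pow_left₀ h1t h1 n
        _ = Real.exp ((n:ℝ) * (-t)) := (Real.exp_nat_mul _ n).symm
        _ = Real.exp (-c) := by rw [show (n:ℝ) * (-t) = -((n:ℝ) * t) by ring, htn]
    -- lower bound : exp (-c) * (1 - n * t^2) ≤ (1-t)^n
    have hlow : Real.exp (-c) * (1 - (n:ℝ) * t ^ 2) ≤ (1 - t) ^ n := by
      have hexp : (0:ℝ) < Real.exp t := Real.exp_pos t
      have hstep : Real.exp (-t) * (1 - t ^ 2) ≤ 1 - t := by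
        have h1 : t + 1 ≤ Real.exp t := Real.add_one_le_exp t
        have h2 : Real.exp (-t) = (Real.exp t)⁻¹ := Real.exp_neg t
        rw [h2, inv_mul_le_iff₀ hexp]
        nlinarith
      have hnn : 0 ≤ Real.exp (-t) * (1 - t ^ 2) := by
        have h : (0:ℝ) ≤ 1 - t ^ 2 := by nlinarith
        positivity
      have h3 : (Real.exp (-t) * (1 - t ^ 2)) ^ n ≤ (1 - t) ^ n :=
        pow_le_pow_left₀ hnn hstep n
      have h4 : (Real.exp (-t) * (1 - t ^ 2)) ^ n
          = Real.exp (-c) * (1 - t ^ 2) ^ n := by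
        rw [mul_pow, ← Real.exp_nat_mul]
        rw [show (n:ℝ) * (-t) = -((n:ℝ) * t) by ring, htn]
      have h5 : 1 - (n:ℝ) * t ^ 2 ≤ (1 - t ^ 2) ^ n := by
        have h := one_add_mul_le_pow (a := -t ^ 2) (by nlinarith) n
        have e : (1 + -t ^ 2) = 1 - t ^ 2 := by ring
        rw [e] at h
        linarith
      calc Real.exp (-c) * (1 - (n:ℝ) * t ^ 2)
          ≤ Real.exp (-c) * (1 - t ^ 2) ^ n := by
            apply mul_le_mul_of_nonneg_left h5 (Real.exp_nonneg _)
        _ = (Real.exp (-t) * (1 - t ^ 2)) ^ n := h4.symm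
        _ ≤ (1 - t) ^ n := h3
    -- c^2 ≤ exp c
    have hc2 : c ^ 2 ≤ Real.exp c := by
      have h1 : 1 + c / 4 ≤ Real.exp (c / 4) := by
        have := Real.add_one_le_exp (c / 4); linarith
      have h2 : Real.exp c = (Real.exp (c / 4)) ^ 4 := by
        rw [← Real.exp_nat_mul]
        norm_num
        ring
      have h3 : (0:ℝ) < 1 + c / 4 := by linarith
      have h4 : c ≤ (1 + c / 4) ^ 2 := by nlinarith [sq_nonneg (1 - c / 4)]
      have h5 : (1 + c / 4) ^ 2 ≤ (Real.exp (c / 4)) ^ 2 :=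
        pow_le_pow_left₀ h3.le h1 2
      rw [h2]
      calc c ^ 2 ≤ ((1 + c / 4) ^ 2) ^ 2 := by nlinarith
        _ ≤ ((Real.exp (c / 4)) ^ 2) ^ 2 := pow_le_pow_left₀ (by positivity) h5 2
        _ = (Real.exp (c / 4)) ^ 4 := by ring
    -- combine
    have hdiff : Real.exp (-c) - (1 - t) ^ n ≤ 1 / n := by
      have h1 : Real.exp (-c) - (1 - t) ^ n ≤ Real.exp (-c) * ((n:ℝ) * t ^ 2) := by
        nlinarith [hlow]
      have h2 : Real.exp (-c) * ((n:ℝ) * t ^ 2) = Real.exp (-c) * c ^ 2 / n := by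
        have hc' : c = (n:ℝ) * t := htn.symm
        rw [hc']
        field_simp
      have h3 : Real.exp (-c) * c ^ 2 ≤ 1 := by
        have he : Real.exp (-c) = (Real.exp c)⁻¹ := Real.exp_neg c
        rw [he, inv_mul_le_iff₀ (Real.exp_pos c)]
        linarith
      have h4 : Real.exp (-c) * c ^ 2 / n ≤ 1 / n := by gcongr
      linarith
    rw [abs_sub_comm, abs_of_nonneg (by linarith)]
    have h : (0:ℝ) ≤ Real.log n / n := by positivity
    linarith
  · -- case c > n : probability is 0
    have hya : y < a := by
      have h1 : b - a < c * (b - a) / n := by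
        rw [lt_div_iff₀ hn0]
        nlinarith
      have h2 : -c * (b - a) / (n:ℝ) = -(c * (b - a) / n) := by ring
      rw [hy_def, h2]; linarith
    have hPy : P {ω | X i₀ ω ≤ y} = 0 := by
      rw [hcdf i₀ y, if_pos hya, ENNReal.ofReal_zero]
    have htoReal : (P {ω | ∀ i, X i ω ≤ y}).toReal = 0 := by
      rw [hprod, hPy, zero_pow (by omega), ENNReal.toReal_zero]
    rw [htoReal]
    have h1 : Real.exp (-c) ≤ 1 / n := by
      rw [Real.exp_neg, inv_eq_one_div, div_le_div_iff₀ (Real.exp_pos c) hn0]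
      have h2 : (n:ℝ) + 1 ≤ Real.exp n := by
        have := Real.add_one_le_exp (n:ℝ); linarith
      have h3 : Real.exp (n:ℝ) ≤ Real.exp c := Real.exp_le_exp.mpr hcn.le
      nlinarith
    rw [zero_sub, abs_neg, abs_of_nonneg (Real.exp_nonneg _)]
    have h : (0:ℝ) ≤ Real.log n / n := by positivity
    linarith
end

section
/- (Fréchet approximation for maxima of standard Cauchy variables) For each integer n ≥ 1, let X_1, …, X_n be i.i.d. standard Cauchy random variables, i.e. with distribution function F(y) = arctan(y)/π + 1/2 and density 1/(π(1 + y²)) on ℝ. Then for all x > 0, | P( X_(n) ≤ n x / π ) − exp(−x^{−1}) | ≤ (log n)/n + π² (log n)³/(3 n²) + 1/n. -/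
open MeasureTheory ProbabilityTheory Real

private lemma my_arctan_le_self {t : ℝ} (ht : 0 ≤ t) : Real.arctan t ≤ t := by
  have hmono : Monotone (fun t : ℝ => t - Real.arctan t) := by
    apply monotone_of_deriv_nonneg
    · exact differentiable_id.sub Real.differentiable_arctan
    · intro x
      have h : HasDerivAt (fun t : ℝ => t - Real.arctan t) (1 - 1 / (1 + x ^ 2)) x :=
        (hasDerivAt_id x).sub (Real.hasDerivAt_arctan x)
      rw [h.deriv]
      have h1 : (0:ℝ) < 1 + x ^ 2 := by positivity
      rw [sub_nonneg, div_le_one h1]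
      nlinarith
  have := hmono ht
  simpa [Real.arctan_zero] using this

private lemma my_sub_cube_le_arctan {t : ℝ} (ht : 0 ≤ t) : t - t ^ 3 / 3 ≤ Real.arctan t := by
  have hmono : Monotone (fun t : ℝ => Real.arctan t - (t - t ^ 3 / 3)) := by
    apply monotone_of_deriv_nonneg
    · exact Real.differentiable_arctan.sub (by fun_prop)
    · intro x
      have h2 : HasDerivAt (fun t : ℝ => t - t ^ 3 / 3) (1 - x ^ 2) x := by
        have := ((hasDerivAt_pow 3 x).div_const 3)
        have h := (hasDerivAt_id x).sub this
        exact h.congr_deriv (by push_cast; ring)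
      have h : HasDerivAt (fun t : ℝ => Real.arctan t - (t - t ^ 3 / 3))
          (1 / (1 + x ^ 2) - (1 - x ^ 2)) x := (Real.hasDerivAt_arctan x).sub h2
      rw [h.deriv]
      have h1 : (0:ℝ) < 1 + x ^ 2 := by positivity
      rw [sub_nonneg, le_div_iff₀ h1]
      nlinarith [sq_nonneg (x^2)]
  have := hmono ht
  simpa [Real.arctan_zero] using this

private lemma my_sq_mul_exp_neg_le_one {s : ℝ} (hs : 0 ≤ s) : s ^ 2 * Real.exp (-s) ≤ 1 := by
  have h1 : s / 2 ≤ Real.exp ((s - 2) / 2) := by linarith [Real.add_one_le_exp ((s - 2) / 2)]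
  have h2 : (s / 2) ^ 2 ≤ Real.exp ((s - 2) / 2) ^ 2 := pow_le_pow_left₀ (by positivity) h1 2
  have h3 : Real.exp ((s - 2) / 2) ^ 2 = Real.exp (s - 2) := by
    rw [sq, ← Real.exp_add]; ring_nf
  have h4 : Real.exp (s - 2) * Real.exp (-s) = Real.exp (-2) := by
    rw [← Real.exp_add]; ring_nf
  have h6 : Real.exp 2 = Real.exp 1 * Real.exp 1 := by rw [← Real.exp_add]; norm_num
  have h7 : (4:ℝ) ≤ Real.exp 2 := by nlinarith [Real.exp_one_gt_d9]
  have h5 : Real.exp (-2) ≤ 1 / 4 := by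
    rw [Real.exp_neg, inv_le_comm₀ (Real.exp_pos 2) (by norm_num)]
    norm_num
    linarith
  rw [h3] at h2
  have h8 := mul_le_mul_of_nonneg_right h2 (Real.exp_pos (-s)).le
  rw [h4] at h8
  nlinarith [Real.exp_pos (-s)]

private lemma my_exp_le_one_add {d : ℝ} (h0 : 0 ≤ d) (h1 : d ≤ 1) :
    Real.exp d ≤ 1 + 3 * d := by
  have hm : Real.exp (-d) * Real.exp d = 1 := by rw [← Real.exp_add]; simp
  have ha : 1 - d ≤ Real.exp (-d) := by linarith [Real.add_one_le_exp (-d)]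
  have hb : Real.exp d * (1 - d) ≤ 1 := by nlinarith [Real.exp_pos d]
  have hc : Real.exp d ≤ Real.exp 1 := Real.exp_le_exp.mpr h1
  nlinarith [Real.exp_one_lt_d9, Real.exp_pos d]

private lemma my_pi_sq : π ^ 2 ≤ 9.87 := by
  have h1 : π < 3.1416 := by linarith [Real.pi_lt_d6]
  have h0 : 0 < π := Real.pi_pos
  nlinarith

private lemma my_log_le_half {N : ℝ} (hN : 1 ≤ N) : Real.log N ≤ N / 2 := by
  have hN0 : (0:ℝ) < N := by linarith
  have hs0 : 0 < Real.sqrt N := Real.sqrt_pos.mpr hN0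
  have hs2 : Real.sqrt N ^ 2 = N := Real.sq_sqrt hN0.le
  have hlogs : Real.log (Real.sqrt N) ≤ Real.sqrt N - 1 :=
    by linarith [Real.log_le_sub_one_of_pos hs0]
  have hLs : Real.log N = 2 * Real.log (Real.sqrt N) := by
    rw [← hs2, Real.log_pow]; push_cast [hs2]; ring
  rw [hLs]
  nlinarith [sq_nonneg (Real.sqrt N - 2), hs2]

private lemma my_delta_le_one {N : ℝ} (hN : 3 ≤ N) :
    π ^ 2 * Real.log N ^ 3 / (3 * N ^ 2) ≤ 1 := by
  have hN0 : (0:ℝ) < N := by linarith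
  have hL0 : (0:ℝ) ≤ Real.log N := Real.log_nonneg (by linarith)
  have hs0 : 0 < Real.sqrt N := Real.sqrt_pos.mpr hN0
  have hs2 : Real.sqrt N ^ 2 = N := Real.sq_sqrt hN0.le
  have hs17 : (1.7:ℝ) ≤ Real.sqrt N := by nlinarith
  have hLs : Real.log N = 2 * Real.log (Real.sqrt N) := by
    rw [← hs2, Real.log_pow]; push_cast [hs2]; ring
  have hE1 : (2.7182818283 : ℝ) < Real.exp 1 := Real.exp_one_gt_d9
  have hlogsE : Real.log (Real.sqrt N) ≤ Real.sqrt N / Real.exp 1 := by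
    have h0 : 0 < Real.sqrt N / Real.exp 1 := by positivity
    have h1 := Real.log_le_sub_one_of_pos h0
    rw [Real.log_div (ne_of_gt hs0) (Real.exp_ne_zero 1), Real.log_exp] at h1
    linarith
  rw [div_le_one (by positivity)]
  have h1 : Real.log N * Real.exp 1 ≤ 2 * Real.sqrt N := by
    calc Real.log N * Real.exp 1 = 2 * Real.log (Real.sqrt N) * Real.exp 1 := by rw [hLs]
      _ ≤ 2 * (Real.sqrt N / Real.exp 1) * Real.exp 1 := by nlinarith [Real.exp_pos 1]
      _ = 2 * Real.sqrt N := by field_simp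
  have h2 : (Real.log N * Real.exp 1) ^ 3 ≤ (2 * Real.sqrt N) ^ 3 :=
    pow_le_pow_left₀ (by positivity) h1 3
  have he3 : (20 : ℝ) ≤ (Real.exp 1) ^ 3 := by
    have e1 : (2.718:ℝ) ≤ Real.exp 1 := by linarith
    have := pow_le_pow_left₀ (by norm_num : (0:ℝ) ≤ 2.718) e1 3
    nlinarith
  have h2' : Real.log N ^ 3 * (Real.exp 1) ^ 3 ≤ 8 * Real.sqrt N ^ 3 := by
    calc Real.log N ^ 3 * (Real.exp 1) ^ 3 = (Real.log N * Real.exp 1) ^ 3 :=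
          (mul_pow _ _ 3).symm
      _ ≤ (2 * Real.sqrt N) ^ 3 := h2
      _ = 8 * Real.sqrt N ^ 3 := by ring
  have h3 : 20 * Real.log N ^ 3 ≤ 8 * Real.sqrt N ^ 3 := by
    nlinarith [mul_le_mul_of_nonneg_left he3 (pow_nonneg hL0 3)]
  have h4 : π ^ 2 * Real.log N ^ 3 ≤ 9.87 * Real.log N ^ 3 := by
    nlinarith [pow_nonneg hL0 3, my_pi_sq]
  have h6 : (3.948:ℝ) * Real.sqrt N ^ 3 ≤ 3 * Real.sqrt N * Real.sqrt N ^ 3 := by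
    nlinarith [pow_nonneg hs0.le 3]
  have hs4 : N ^ 2 = Real.sqrt N ^ 4 := by
    calc N ^ 2 = (Real.sqrt N ^ 2) ^ 2 := by rw [hs2]
      _ = Real.sqrt N ^ 4 := by ring
  nlinarith [h3, h4, h6, hs4]

private lemma my_eps_le_I {I N : ℝ} (hI : 0 < I) (hIN : I ≤ N / 2) :
    π ^ 2 * I ^ 3 / (3 * N ^ 2) ≤ I := by
  have hN0 : (0:ℝ) < N := by linarith
  rw [div_le_iff₀ (by positivity)]
  have h1 : I ^ 2 ≤ (N / 2) ^ 2 := pow_le_pow_left₀ hI.le hIN 2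
  have h2 : π ^ 2 * I ^ 3 ≤ 9.87 * I ^ 3 := by
    nlinarith [pow_nonneg hI.le 3, my_pi_sq]
  nlinarith [mul_le_mul_of_nonneg_left h1 (by positivity : (0:ℝ) ≤ 9.87 * I)]

private lemma my_case1a {I N A : ℝ} (hI : 0 < I) (hN : 0 < N)
    (hA : -I - 2 * I ^ 2 / N ≤ A) : Real.exp (-I) - Real.exp A ≤ 2 / N := by
  have hη : (0:ℝ) ≤ 2 * I ^ 2 / N := by positivity
  have h0 : Real.exp (-I - 2 * I ^ 2 / N) ≤ Real.exp A := Real.exp_le_exp.mpr hA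
  have h1 : Real.exp (-I - 2 * I ^ 2 / N) = Real.exp (-I) * Real.exp (-(2 * I ^ 2 / N)) := by
    rw [← Real.exp_add]; ring_nf
  have h2 : 1 - 2 * I ^ 2 / N ≤ Real.exp (-(2 * I ^ 2 / N)) := by
    linarith [Real.add_one_le_exp (-(2 * I ^ 2 / N))]
  have h3 := mul_le_mul_of_nonneg_left h2 (Real.exp_pos (-I)).le
  have h4 : Real.exp (-I) * (2 * I ^ 2 / N) ≤ 2 / N := by
    calc Real.exp (-I) * (2 * I ^ 2 / N) = (I ^ 2 * Real.exp (-I)) * (2 / N) := by ring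
      _ ≤ 1 * (2 / N) :=
        mul_le_mul_of_nonneg_right (my_sq_mul_exp_neg_le_one hI.le) (by positivity)
      _ = 2 / N := one_mul _
  nlinarith [Real.exp_pos (-I)]

private lemma my_case1b {I ε A : ℝ} (hε0 : 0 ≤ ε) (hεI : ε ≤ I)
    (hA : A ≤ -I + ε) : Real.exp A - Real.exp (-I) ≤ ε := by
  have h1 : Real.exp A ≤ Real.exp (-I + ε) := Real.exp_le_exp.mpr hA
  have hw : Real.exp (-I) * Real.exp ε = Real.exp (-I + ε) := (Real.exp_add _ _).symm
  have hm : Real.exp (-ε) * Real.exp ε = 1 := by rw [← Real.exp_add]; simp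
  have ha : 1 - ε ≤ Real.exp (-ε) := by linarith [Real.add_one_le_exp (-ε)]
  have h2 : Real.exp ε - 1 ≤ ε * Real.exp ε := by nlinarith [Real.exp_pos ε]
  have h5 := mul_le_mul_of_nonneg_left h2 (Real.exp_pos (-I)).le
  have h4 : Real.exp (-I + ε) ≤ 1 := Real.exp_le_one_iff.mpr (by linarith)
  have h6 := mul_le_mul_of_nonneg_left h4 hε0
  calc Real.exp A - Real.exp (-I) ≤ Real.exp (-I + ε) - Real.exp (-I) := by linarith
    _ = Real.exp (-I) * Real.exp ε - Real.exp (-I) := by rw [hw]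
    _ = Real.exp (-I) * (Real.exp ε - 1) := by ring
    _ ≤ Real.exp (-I) * (ε * Real.exp ε) := h5
    _ = ε * (Real.exp (-I) * Real.exp ε) := by ring
    _ ≤ ε := by rw [hw]; linarith

private lemma my_case2a {N L δ A : ℝ} (hN3 : 3 ≤ N) (hL1 : 1 ≤ L) (hδ0 : 0 ≤ δ)
    (hδ1 : δ ≤ 1) (hexpL : Real.exp (-L) = 1 / N) (hA : A ≤ δ - L) :
    Real.exp A ≤ L / N + δ := by
  have hN0 : (0:ℝ) < N := by linarith
  have h1 : Real.exp A ≤ Real.exp δ * (1 / N) := by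
    rw [← hexpL, ← Real.exp_add]
    exact Real.exp_le_exp.mpr (by linarith)
  have h2 : Real.exp δ ≤ 1 + 3 * δ := my_exp_le_one_add hδ0 hδ1
  have h3 : Real.exp δ * (1 / N) ≤ (1 + 3 * δ) * (1 / N) :=
    mul_le_mul_of_nonneg_right h2 (by positivity)
  have h5 : (1 + 3 * δ) ≤ L + δ * N := by
    nlinarith [mul_nonneg (by linarith : (0:ℝ) ≤ N - 3) hδ0]
  have h6 : L / N + δ = (L + δ * N) * (1 / N) := by field_simp
  have h7 : (1 + 3 * δ) * (1 / N) ≤ (L + δ * N) * (1 / N) :=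
    mul_le_mul_of_nonneg_right h5 (by positivity)
  linarith

private lemma my_I_le_L {x L I : ℝ} (hx : 0 < x) (hL : 0 < L) (hI : 0 < I)
    (hxI : x * I = 1) (h : 1 / L ≤ x) : I ≤ L := by
  have h1 : 1 ≤ x * L := by rw [div_le_iff₀ hL] at h; linarith
  nlinarith [mul_le_mul_of_nonneg_left h1 hI.le]

private lemma my_L_le_I {x L I : ℝ} (hx : 0 < x) (hL : 0 < L) (hI : 0 < I)
    (hxI : x * I = 1) (h : x ≤ 1 / L) : L ≤ I := by
  have h1 : x * L ≤ 1 := by rw [le_div_iff₀ hL] at h; linarith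
  nlinarith [mul_le_mul_of_nonneg_right h1 hI.le]

private lemma my_Nu_le {u t N I : ℝ} (hN : 0 < N) (h1 : u * π ≤ t)
    (h2 : t * N = π * I) : N * u ≤ I := by
  nlinarith [Real.pi_pos, mul_le_mul_of_nonneg_right h1 hN.le]

private lemma my_Nu2 {N u I : ℝ} (hN : 0 < N) (hu : 0 ≤ u) (h : N * u ≤ I) :
    N * u ^ 2 ≤ I ^ 2 / N := by
  rw [le_div_iff₀ hN]
  nlinarith [mul_nonneg hN.le hu]

private lemma my_logp_aux {u : ℝ} (h0 : 0 < u) (hh : u < 1 / 2) :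
    u ≤ (u + 2 * u ^ 2) * (1 - u) := by
  nlinarith [mul_nonneg (sq_nonneg u) (by linarith : (0:ℝ) ≤ 1 - 2 * u)]

private lemma my_trivial_bound (n : ℕ) (y x : ℝ) (hx : 0 < x) :
    |(Real.arctan y / π + 1 / 2) ^ n - Real.exp (-x⁻¹)| ≤ 1 := by
  have hπ : (0:ℝ) < π := Real.pi_pos
  have h1 : -(π / 2) < Real.arctan y := Real.neg_pi_div_two_lt_arctan y
  have h2 : Real.arctan y < π / 2 := Real.arctan_lt_pi_div_two y
  have hb0 : 0 ≤ Real.arctan y / π + 1 / 2 := by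
    have h3 : -(1 / 2 : ℝ) ≤ Real.arctan y / π := by
      rw [le_div_iff₀ hπ]; linarith
    linarith
  have hb1 : Real.arctan y / π + 1 / 2 ≤ 1 := by
    have h3 : Real.arctan y / π ≤ 1 / 2 := by
      rw [div_le_iff₀ hπ]; linarith
    linarith
  have hp0 : 0 ≤ (Real.arctan y / π + 1 / 2) ^ n := by positivity
  have hp1 : (Real.arctan y / π + 1 / 2) ^ n ≤ 1 := pow_le_one₀ hb0 hb1
  have he0 : 0 < Real.exp (-x⁻¹) := Real.exp_pos _
  have he1 : Real.exp (-x⁻¹) ≤ 1 :=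
    Real.exp_le_one_iff.mpr (neg_nonpos.mpr (by positivity))
  rw [abs_le]; constructor <;> linarith

private lemma my_n2_bound :
    (1:ℝ) ≤ Real.log 2 / 2 + π ^ 2 * Real.log 2 ^ 3 / (3 * 2 ^ 2) + 1 / 2 := by
  have hl : (0.6931471803:ℝ) < Real.log 2 := Real.log_two_gt_d9
  have hp : (3.141592:ℝ) < π := Real.pi_gt_d6
  have h1 : (9.86:ℝ) ≤ π ^ 2 := by nlinarith
  have h2 : (0.33:ℝ) ≤ Real.log 2 ^ 3 := by
    nlinarith [sq_nonneg (Real.log 2 - 0.6931),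
      mul_nonneg (by linarith : (0:ℝ) ≤ Real.log 2) (sq_nonneg (Real.log 2 - 0.6931))]
  nlinarith [mul_le_mul h1 h2 (by norm_num) (by positivity)]

private lemma my_prob_max_eq {Ω : Type*} [MeasurableSpace Ω] (P : Measure Ω)
    [IsProbabilityMeasure P] (n : ℕ) (X : Fin n → Ω → ℝ)
    (hcdf : ∀ i y, P {ω | X i ω ≤ y} = ENNReal.ofReal (Real.arctan y / π + 1 / 2))
    (hindep : iIndepFun X P) (y : ℝ) :
    (P {ω | ∀ i, X i ω ≤ y}).toReal = (Real.arctan y / π + 1 / 2) ^ n := by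
  have hF0 : 0 ≤ Real.arctan y / π + 1 / 2 := by
    have h1 := Real.neg_pi_div_two_lt_arctan y
    have h2 : (0:ℝ) < π := Real.pi_pos
    have h3 : -(1/2 : ℝ) < Real.arctan y / π := by
      rw [lt_div_iff₀ h2]; nlinarith
    linarith
  have hset : {ω | ∀ i, X i ω ≤ y} = ⋂ i, X i ⁻¹' Set.Iic y := by
    ext ω; simp [Set.mem_iInter]
  rw [hset, hindep.meas_iInter (fun i => ⟨Set.Iic y, measurableSet_Iic, rfl⟩)]
  have h4 : ∀ i : Fin n, P (X i ⁻¹' Set.Iic y) = ENNReal.ofReal (Real.arctan y / π + 1 / 2) := by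
    intro i
    rw [← hcdf i y]
    rfl
  simp only [h4, Finset.prod_const, Finset.card_univ, Fintype.card_fin]
  rw [← ENNReal.ofReal_pow hF0, ENNReal.toReal_ofReal (by positivity)]

private lemma my_key_ineq (n : ℕ) (hn3 : 3 ≤ n) (x : ℝ) (hx : 0 < x) :
    |(Real.arctan (n * x / π) / π + 1 / 2) ^ n - Real.exp (-x⁻¹)|
      ≤ Real.log n / n + π ^ 2 * Real.log n ^ 3 / (3 * n ^ 2) + 1 / n := by
  have hπ : 0 < π := Real.pi_pos
  obtain ⟨N, hNdef⟩ : ∃ N : ℝ, N = (n : ℝ) := ⟨_, rfl⟩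
  rw [← hNdef]
  have hN3 : (3:ℝ) ≤ N := by rw [hNdef]; exact_mod_cast hn3
  have hNpos : (0:ℝ) < N := by linarith
  obtain ⟨L, hLdef⟩ : ∃ L : ℝ, L = Real.log N := ⟨_, rfl⟩
  rw [← hLdef]
  have hL1 : (1:ℝ) ≤ L := by
    rw [hLdef, Real.le_log_iff_exp_le hNpos]
    linarith [Real.exp_one_lt_d9]
  have hL0 : (0:ℝ) < L := by linarith
  have hLN : L ≤ N / 2 := by rw [hLdef]; exact my_log_le_half (by linarith)
  obtain ⟨δ, hδdef⟩ : ∃ d : ℝ, d = π ^ 2 * L ^ 3 / (3 * N ^ 2) := ⟨_, rfl⟩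
  rw [← hδdef]
  have hδ0 : (0:ℝ) ≤ δ := by rw [hδdef]; positivity
  have hδ1 : δ ≤ 1 := by rw [hδdef, hLdef]; exact my_delta_le_one hN3
  -- basic quantities
  obtain ⟨I, hIdef⟩ : ∃ I : ℝ, I = x⁻¹ := ⟨_, rfl⟩
  rw [← hIdef]
  have hI : 0 < I := by rw [hIdef]; positivity
  have hxI : x * I = 1 := by rw [hIdef]; field_simp
  obtain ⟨t, htdef⟩ : ∃ t : ℝ, t = π * I / N := ⟨_, rfl⟩
  have ht : 0 < t := by rw [htdef]; positivity
  have htN : t * N = π * I := by rw [htdef]; field_simp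
  obtain ⟨a, hadef⟩ : ∃ a : ℝ, a = Real.arctan t := ⟨_, rfl⟩
  have ha0 : 0 < a := by rw [hadef]; simpa [Real.arctan_zero] using Real.arctan_strictMono ht
  have haπ : a < π / 2 := by rw [hadef]; exact Real.arctan_lt_pi_div_two t
  have ha_le : a ≤ t := by rw [hadef]; exact my_arctan_le_self ht.le
  have ha_ge : t - t ^ 3 / 3 ≤ a := by rw [hadef]; exact my_sub_cube_le_arctan ht.le
  obtain ⟨u, hudef⟩ : ∃ u : ℝ, u = a / π := ⟨_, rfl⟩
  have hu0 : 0 < u := by rw [hudef]; positivity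
  have huh : u < 1 / 2 := by rw [hudef, div_lt_iff₀ hπ]; linarith
  obtain ⟨p, hpdef⟩ : ∃ p : ℝ, p = 1 - u := ⟨_, rfl⟩
  have hp0 : 0 < p := by rw [hpdef]; linarith
  have hp1 : p < 1 := by rw [hpdef]; linarith
  -- the base of the power equals p
  have harc : Real.arctan (N * x / π) = π / 2 - a := by
    have hy : 0 < N * x / π := by positivity
    have h1 := Real.arctan_inv_of_pos hy
    have h2 : (N * x / π)⁻¹ = t := by
      rw [htdef, hIdef]; field_simp
    rw [h2, ← hadef] at h1
    linarith
  have hbase : Real.arctan (N * x / π) / π + 1 / 2 = p := by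
    rw [harc, hpdef, hudef]; field_simp; ring
  rw [hbase]
  -- p^n as exponential
  have hpow : p ^ n = Real.exp (N * Real.log p) := by
    rw [← Real.exp_log (pow_pos hp0 n), Real.log_pow, hNdef]
  rw [hpow]
  -- bounds on N * u
  have huπ : u * π ≤ t := by
    rw [hudef, div_mul_cancel₀ _ hπ.ne']; exact ha_le
  have hNu_le : N * u ≤ I := my_Nu_le hNpos huπ htN
  obtain ⟨ε, hεdef⟩ : ∃ e : ℝ, e = π ^ 2 * I ^ 3 / (3 * N ^ 2) := ⟨_, rfl⟩
  have hε0 : 0 ≤ ε := by rw [hεdef]; positivity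
  have hNu_ge : I - ε ≤ N * u := by
    have h5 : (t - t ^ 3 / 3) / π ≤ u := by
      rw [hudef]
      exact (div_le_div_iff_of_pos_right hπ).mpr ha_ge
    have h4 : N * ((t - t ^ 3 / 3) / π) = I - ε := by
      rw [htdef, hεdef]; field_simp
    have h6 := mul_le_mul_of_nonneg_left h5 hNpos.le
    rw [h4] at h6
    exact h6
  -- bounds on log p
  have hlogp_le : Real.log p ≤ -u := by
    have h := Real.log_le_sub_one_of_pos hp0
    rw [hpdef] at h ⊢
    linarith
  have hlogp_ge : -(u + 2 * u ^ 2) ≤ Real.log p := by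
    have h1 := Real.log_le_sub_one_of_pos (inv_pos.mpr hp0)
    rw [Real.log_inv] at h1
    have hinv : p⁻¹ - 1 = u / p := by
      rw [eq_div_iff hp0.ne', sub_mul, inv_mul_cancel₀ hp0.ne', hpdef]; ring
    have hup : u / p ≤ u + 2 * u ^ 2 := by
      rw [div_le_iff₀ hp0, hpdef]
      exact my_logp_aux hu0 huh
    linarith
  -- bounds on N * log p
  have hA_le : N * Real.log p ≤ -I + ε := by
    have hm := mul_le_mul_of_nonneg_left hlogp_le hNpos.le
    linarith [hNu_ge]
  have hA_ge : -I - 2 * I ^ 2 / N ≤ N * Real.log p := by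
    have hm := mul_le_mul_of_nonneg_left hlogp_ge hNpos.le
    have h2 := my_Nu2 hNpos hu0.le hNu_le
    ring_nf at hm h2 ⊢
    linarith [hNu_le]
  have hLNpos : 0 < L / N := by positivity
  have h1N : (0:ℝ) < 1 / N := by positivity
  rcases le_total (1 / L) x with hc | hc
  · -- x ≥ 1/L
    have hIL : I ≤ L := my_I_le_L hx hL0 hI hxI hc
    have hεδ : ε ≤ δ := by
      rw [hεdef, hδdef]
      exact (div_le_div_iff_of_pos_right (by positivity)).mpr
        (mul_le_mul_of_nonneg_left (pow_le_pow_left₀ hI.le hIL 3) (sq_nonneg π))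
    have hεI : ε ≤ I := by
      rw [hεdef]; exact my_eps_le_I hI (le_trans hIL hLN)
    rcases le_total (N * Real.log p) (-I) with hAB | hAB
    · have habs : |Real.exp (N * Real.log p) - Real.exp (-I)|
          = Real.exp (-I) - Real.exp (N * Real.log p) := by
        rw [abs_of_nonpos (by linarith [Real.exp_le_exp.mpr hAB])]
        ring
      rw [habs]
      have h2 := my_case1a hI hNpos hA_ge
      have h3 : 1 / N ≤ L / N := by gcongr
      have h4 : (2:ℝ) / N = 1 / N + 1 / N := by ring
      linarith
    · have habs : |Real.exp (N * Real.log p) - Real.exp (-I)|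
          = Real.exp (N * Real.log p) - Real.exp (-I) := by
        rw [abs_of_nonneg (by linarith [Real.exp_le_exp.mpr hAB])]
      rw [habs]
      have h2 := my_case1b hε0 hεI hA_le
      linarith
  · -- x ≤ 1/L
    have hLI : L ≤ I := my_L_le_I hx hL0 hI hxI hc
    have hexpL : Real.exp (-L) = 1 / N := by
      rw [hLdef, Real.exp_neg, Real.exp_log hNpos, one_div]
    have hexpI : Real.exp (-I) ≤ 1 / N := by
      rw [← hexpL]
      exact Real.exp_le_exp.mpr (by linarith)
    -- lower bound on N*u in this regime
    have hta : π * L / N ≤ t := by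
      rw [div_le_iff₀ hNpos, htN]
      exact mul_le_mul_of_nonneg_left hLI hπ.le
    have harc1 : Real.arctan (π * L / N) ≤ a := by
      rw [hadef]
      exact Real.arctan_strictMono.monotone hta
    have harc2 : π * L / N - (π * L / N) ^ 3 / 3 ≤ Real.arctan (π * L / N) :=
      my_sub_cube_le_arctan (by positivity)
    have h5 : (π * L / N - (π * L / N) ^ 3 / 3) / π ≤ u := by
      rw [hudef]
      exact (div_le_div_iff_of_pos_right hπ).mpr (le_trans harc2 harc1)
    have h4 : N * ((π * L / N - (π * L / N) ^ 3 / 3) / π) = L - δ := by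
      rw [hδdef]; field_simp
    have hNu2 : L - δ ≤ N * u := by
      have h6 := mul_le_mul_of_nonneg_left h5 hNpos.le
      rw [h4] at h6
      exact h6
    have hAδ : N * Real.log p ≤ δ - L := by
      have hm := mul_le_mul_of_nonneg_left hlogp_le hNpos.le
      linarith
    have hEA := my_case2a hN3 hL1 hδ0 hδ1 hexpL hAδ
    rw [abs_le]
    constructor
    · have := Real.exp_pos (N * Real.log p)
      linarith
    · have := Real.exp_pos (-I)
      linarith

/-- **Fréchet approximation for maxima of standard Cauchy variables.** If `X₁, …, Xₙ` are
i.i.d. standard Cauchy random variables, with distribution function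
`F(y) = arctan(y)/π + 1/2`, then for all `x > 0`,
`|P(X₍ₙ₎ ≤ n x/π) − exp(−x⁻¹)| ≤ (log n)/n + π² (log n)³/(3n²) + 1/n`. -/
theorem frechet_approx_max_cauchy {Ω : Type*} [MeasurableSpace Ω] (P : Measure Ω)
    [IsProbabilityMeasure P] (n : ℕ) (hn : 1 ≤ n) (X : Fin n → Ω → ℝ)
    (hmeas : ∀ i, Measurable (X i))
    (hcdf : ∀ i y, P {ω | X i ω ≤ y} = ENNReal.ofReal (Real.arctan y / π + 1 / 2))
    (hindep : iIndepFun X P) :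
    ∀ x : ℝ, 0 < x →
      |(P {ω | ∀ i, X i ω ≤ n * x / π}).toReal - Real.exp (-x⁻¹)|
        ≤ Real.log n / n + π ^ 2 * (Real.log n) ^ 3 / (3 * n ^ 2) + 1 / n := by
  intro x hx
  rw [my_prob_max_eq P n X hcdf hindep (n * x / π)]
  by_cases h3 : 3 ≤ n
  · exact my_key_ineq n h3 x hx
  · push_neg at h3
    interval_cases n
    · have h := my_trivial_bound 1 ((1:ℕ) * x / π) x hx
      push_cast at h ⊢
      refine h.trans ?_
      simp [Real.log_one]
    · have h := my_trivial_bound 2 ((2:ℕ) * x / π) x hx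
      push_cast at h ⊢
      refine h.trans ?_
      have := my_n2_bound
      norm_num at this ⊢
      linarith
end

section
/- (Approximation of geometric maxima by the continuous Gumbel distribution) For each integer n ≥ 1, let X_1, …, X_n be i.i.d. geometric random variables with success probability p ∈ (0,1) and failure probability q = 1 − p. Then for all x ∈ ℝ, | P( X_(n) < (log n + x)/log(1/q) ) − exp(−e^{−x}) | ≤ (log n)/(q n) + 1/n + e^{−1} log(1/q). -/
open MeasureTheory ProbabilityTheory

lemma te_le_exp_neg_one (t : ℝ) : t * Real.exp (-t) ≤ Real.exp (-1) := by
  have h := Real.add_one_le_exp (t - 1)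
  have h2 : t * Real.exp (-t) ≤ Real.exp (t - 1) * Real.exp (-t) := by
    apply mul_le_mul_of_nonneg_right (by linarith) (Real.exp_pos _).le
  calc t * Real.exp (-t) ≤ Real.exp (t - 1) * Real.exp (-t) := h2
    _ = Real.exp (-1) := by rw [← Real.exp_add]; ring_nf

lemma exp_diff_le (a b : ℝ) (ha : 0 < a) (hab : a ≤ b) :
    Real.exp (-a) - Real.exp (-b) ≤ Real.exp (-1) * (Real.log b - Real.log a) := by
  have hmono : MonotoneOn (fun t => Real.exp (-1) * Real.log t + Real.exp (-t)) (Set.Icc a b) := by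
    have hsub : Set.Icc a b ⊆ {t : ℝ | 0 < t} := fun t ht => lt_of_lt_of_le ha ht.1
    apply monotoneOn_of_deriv_nonneg (convex_Icc a b)
    · apply ContinuousOn.add
      · exact (Real.continuousOn_log.mono (fun t ht => ne_of_gt (hsub ht))).const_smul (Real.exp (-1))
      · exact (Real.continuous_exp.comp continuous_neg).continuousOn
    · intro t ht
      rw [interior_Icc] at ht
      have ht0 : 0 < t := lt_of_lt_of_le ha ht.1.le
      exact (((Real.hasDerivAt_log ht0.ne').const_mul _).add
        ((Real.hasDerivAt_exp (-t)).comp t ((hasDerivAt_neg t)))).differentiableAt.differentiableWithinAt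
    · intro t ht
      rw [interior_Icc] at ht
      have ht0 : 0 < t := lt_of_lt_of_le ha ht.1.le
      have hd : HasDerivAt (fun t => Real.exp (-1) * Real.log t + Real.exp (-t))
          (Real.exp (-1) * t⁻¹ + Real.exp (-t) * (-1)) t :=
        ((Real.hasDerivAt_log ht0.ne').const_mul _).add
          ((Real.hasDerivAt_exp (-t)).comp t (hasDerivAt_neg t))
      rw [hd.deriv]
      have h1 := te_le_exp_neg_one t
      have h2 : Real.exp (-t) ≤ Real.exp (-1) * t⁻¹ := by
        calc Real.exp (-t) = t * Real.exp (-t) * t⁻¹ := by field_simp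
          _ ≤ Real.exp (-1) * t⁻¹ := mul_le_mul_of_nonneg_right h1 (inv_nonneg.2 ht0.le)
      nlinarith
  have := hmono (Set.left_mem_Icc.2 hab) (Set.right_mem_Icc.2 hab) hab
  simp only at this
  linarith

lemma pow_sub_pow_le_aux (A B : ℝ) (hB : 0 ≤ B) (hBA : B ≤ A) (n : ℕ) :
    A ^ (n + 1) - B ^ (n + 1) ≤ (n + 1) * A ^ n * (A - B) := by
  induction n with
  | zero => simp
  | succ k ih =>
    have hA : 0 ≤ A := hB.trans hBA
    have hpow : B ^ (k + 1) ≤ A ^ (k + 1) := pow_le_pow_left₀ hB hBA _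
    have hApow : 0 ≤ A ^ k := pow_nonneg hA _
    calc A ^ (k + 2) - B ^ (k + 2) = A * (A ^ (k + 1) - B ^ (k + 1)) + (A - B) * B ^ (k + 1) := by ring
      _ ≤ A * ((k + 1) * A ^ k * (A - B)) + (A - B) * A ^ (k + 1) := by
          apply add_le_add
          · exact mul_le_mul_of_nonneg_left ih hA
          · exact mul_le_mul_of_nonneg_left hpow (by linarith)
      _ = (↑(k + 1) + 1) * A ^ (k + 1) * (A - B) := by push_cast; ring

lemma exp_neg_quad (s : ℝ) (hs : 0 ≤ s) : Real.exp (-s) ≤ 1 - s + s ^ 2 / 2 := by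
  have hmono : MonotoneOn (fun t : ℝ => 1 - t + t ^ 2 / 2 - Real.exp (-t)) (Set.Icc 0 s) := by
    apply monotoneOn_of_deriv_nonneg (convex_Icc 0 s)
    · fun_prop
    · intro t ht
      exact (((differentiable_const _).sub differentiable_id).add
        ((differentiable_pow 2).div_const 2)).sub
        ((Real.differentiable_exp.comp differentiable_neg)) |>.differentiableAt.differentiableWithinAt
    · intro t ht
      rw [interior_Icc] at ht
      have hd : HasDerivAt (fun t : ℝ => 1 - t + t ^ 2 / 2 - Real.exp (-t))
          (0 - 1 + 2 * t ^ 1 / 2 - Real.exp (-t) * (-1)) t := by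
        exact (((hasDerivAt_const t (1:ℝ)).sub (hasDerivAt_id t)).add
          ((hasDerivAt_pow 2 t).div_const 2)).sub
          ((Real.hasDerivAt_exp (-t)).comp t (hasDerivAt_neg t))
      rw [hd.deriv]
      have h1 : 1 - t ≤ Real.exp (-t) := by linarith [Real.add_one_le_exp (-t)]
      simp only [pow_one]
      linarith
  have h := hmono (Set.left_mem_Icc.2 hs) (Set.right_mem_Icc.2 hs) hs
  simp at h
  linarith

lemma sq_exp_le (r : ℝ) (hr : 0 ≤ r) : r ^ 2 * Real.exp (-r) ≤ 4 * Real.exp (-2) := by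
  have h := Real.add_one_le_exp (r/2 - 1)
  have h1 : r / 2 * Real.exp (-(r/2)) ≤ Real.exp (-1) := by
    have h2 : r / 2 * Real.exp (-(r/2)) ≤ Real.exp (r/2 - 1) * Real.exp (-(r/2)) :=
      mul_le_mul_of_nonneg_right (by linarith) (Real.exp_pos _).le
    calc r / 2 * Real.exp (-(r/2)) ≤ Real.exp (r/2-1) * Real.exp (-(r/2)) := h2
      _ = Real.exp (-1) := by rw [← Real.exp_add]; ring_nf
  have h0 : 0 ≤ r / 2 * Real.exp (-(r/2)) := by positivity
  have e1 : Real.exp (-(r/2)) * Real.exp (-(r/2)) = Real.exp (-r) := by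
    rw [← Real.exp_add]; ring_nf
  have e2 : Real.exp (-1) * Real.exp (-1) = Real.exp (-(2:ℝ)) := by
    rw [← Real.exp_add]; norm_num
  nlinarith [h1, h0]

lemma geom_tail {Ω : Type*} [MeasurableSpace Ω] (P : Measure Ω) [IsProbabilityMeasure P]
    (p q : ℝ) (hp : 0 < p) (hp1 : p < 1) (hq : q = 1 - p) (X : Ω → ℕ) (hm : Measurable X)
    (hg : ∀ k, P {ω | X ω = k} = ENNReal.ofReal (p * q ^ k)) (m : ℕ) :
    P {ω | m ≤ X ω} = ENNReal.ofReal (q ^ m) := by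
  have hq0 : 0 < q := by rw [hq]; linarith
  have hq1 : q < 1 := by rw [hq]; linarith
  have hset : {ω | m ≤ X ω} = ⋃ j, {ω | X ω = m + j} := by
    ext ω
    simp only [Set.mem_setOf_eq, Set.mem_iUnion]
    constructor
    · intro h; exact ⟨X ω - m, by omega⟩
    · rintro ⟨j, hj⟩; omega
  have hd : Pairwise (Function.onFun Disjoint fun j => {ω | X ω = m + j}) := by
    intro i j hij
    simp only [Function.onFun, Set.disjoint_left]
    intro ω h1 h2
    simp only [Set.mem_setOf_eq] at h1 h2
    omega
  have hms : ∀ j : ℕ, MeasurableSet {ω | X ω = m + j} := fun j => hm (measurableSet_singleton _)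
  rw [hset, measure_iUnion hd hms]
  simp_rw [hg]
  have hsum : Summable (fun j : ℕ => p * q ^ (m + j)) := by
    simp_rw [pow_add, ← mul_assoc]
    exact (summable_geometric_of_lt_one hq0.le hq1).mul_left _
  rw [← ENNReal.ofReal_tsum_of_nonneg (fun j => by positivity) hsum]
  congr 1
  simp_rw [pow_add, ← mul_assoc]
  rw [tsum_mul_left, tsum_geometric_of_lt_one hq0.le hq1]
  rw [hq]
  have : (1:ℝ) - (1 - p) = p := by ring
  rw [this]
  field_simp


lemma Dbound (n k : ℕ) (hk : n = k + 1) (s q : ℝ) (hs0 : 0 < s) (hs1 : s < 1)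
    (hq0 : 0 < q) (hq1 : q < 1) (hsq : s ≤ q ∨ True) :
    (n:ℝ) * Real.exp (-s) ^ k * (s ^ 2 / 2) ≤ Real.log n / (q * n) + 1 / n := by
  have hn0 : (0:ℝ) < n := by rw [hk]; positivity
  have hlogn : 0 ≤ Real.log n := Real.log_nonneg (by rw [hk]; push_cast; linarith)
  have hAk : Real.exp (-s) ^ k = Real.exp (-((k:ℝ) * s)) := by
    rw [← Real.exp_nat_mul]; ring_nf
  rcases Nat.eq_zero_or_pos k with hk0 | hk1
  · -- n = 1
    have hn1 : (n:ℝ) = 1 := by rw [hk, hk0]; norm_num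
    have hs2 : s ^ 2 / 2 ≤ 1 := by nlinarith
    rw [hk0, pow_zero, hn1, mul_one, one_mul]
    simp only [Real.log_one, zero_div, mul_one]
    norm_num
    linarith
  · -- n ≥ 2
    have hn2 : 2 ≤ n := by omega
    have hkn : (n:ℝ) / 2 ≤ (k:ℝ) := by
      rw [hk]; push_cast
      have : (1:ℝ) ≤ k := by exact_mod_cast hk1
      linarith
    set r := (n:ℝ) * s / 2 with hrdef
    have hr0 : 0 ≤ r := by positivity
    have hAk_le : Real.exp (-s) ^ k ≤ Real.exp (-r) := by
      rw [hAk, Real.exp_le_exp, hrdef]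
      nlinarith
    have hstep : (n:ℝ) * Real.exp (-s) ^ k * (s ^ 2 / 2) ≤ 2 / n * (r ^ 2 * Real.exp (-r)) := by
      have heq : 2 / (n:ℝ) * r ^ 2 = n * (s ^ 2 / 2) := by
        rw [hrdef]; field_simp
      calc (n:ℝ) * Real.exp (-s) ^ k * (s ^ 2 / 2)
          ≤ (n:ℝ) * Real.exp (-r) * (s ^ 2 / 2) := by
            apply mul_le_mul_of_nonneg_right (mul_le_mul_of_nonneg_left hAk_le hn0.le)
              (by positivity)
        _ = 2 / n * (r ^ 2 * Real.exp (-r)) := by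
            rw [show 2 / (n:ℝ) * (r ^ 2 * Real.exp (-r)) = 2 / n * r ^ 2 * Real.exp (-r) by
              ring, heq]; ring
    have hsq2 := sq_exp_le r hr0
    have hnum : 8 * Real.exp (-2:ℝ) ≤ 1 + Real.log 2 := by
      have he : (2.7182818283:ℝ) < Real.exp 1 := Real.exp_one_gt_d9
      have hl : (0.6931471803:ℝ) < Real.log 2 := Real.log_two_gt_d9
      have he2 : (7:ℝ) < Real.exp 2 := by
        have h22 : Real.exp 2 = Real.exp 1 * Real.exp 1 := by
          rw [← Real.exp_add]; norm_num
        nlinarith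
      rw [show Real.exp (-2:ℝ) = (Real.exp 2)⁻¹ from Real.exp_neg 2]
      have h7 : (Real.exp 2)⁻¹ < 7⁻¹ := by
        apply inv_strictAnti₀ (by norm_num) he2
      nlinarith
    have hlog2 : Real.log 2 ≤ Real.log n := by
      apply Real.log_le_log (by norm_num)
      exact_mod_cast hn2
    have hfin : (n:ℝ) * Real.exp (-s) ^ k * (s ^ 2 / 2) ≤ (1 + Real.log n) / n := by
      calc (n:ℝ) * Real.exp (-s) ^ k * (s ^ 2 / 2) ≤ 2 / n * (r ^ 2 * Real.exp (-r)) := hstep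
        _ ≤ 2 / n * (4 * Real.exp (-2)) := by
            apply mul_le_mul_of_nonneg_left hsq2 (by positivity)
        _ = 8 * Real.exp (-2) / n := by ring
        _ ≤ (1 + Real.log 2) / n := by gcongr
        _ ≤ (1 + Real.log n) / n := by gcongr
    have hsplit : (1 + Real.log n) / n ≤ Real.log n / (q * n) + 1 / n := by
      have h1 : Real.log n / n ≤ Real.log n / (q * n) := by
        apply div_le_div_of_nonneg_left hlogn (by positivity)
        nlinarith
      have h2 : (1 + Real.log n) / (n:ℝ) = 1 / n + Real.log n / n := by ring
      linarith
    linarith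

/-- **Approximation of geometric maxima by the continuous Gumbel distribution.** Let
`X₁, …, Xₙ` be i.i.d. geometric random variables with success probability `p ∈ (0,1)` and
failure probability `q = 1 − p`.  Then for all `x ∈ ℝ`,
`|P(X₍ₙ₎ < (log n + x)/log(1/q)) − exp(−e^{−x})| ≤ (log n)/(qn) + 1/n + e^{−1} log(1/q)`. -/
theorem geometric_max_continuous_gumbel {Ω : Type*} [MeasurableSpace Ω] (P : Measure Ω)
    [IsProbabilityMeasure P] (n : ℕ) (hn : 1 ≤ n) (p q : ℝ) (hp : 0 < p) (hp1 : p < 1)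
    (hq : q = 1 - p) (X : Fin n → Ω → ℕ)
    (hmeas : ∀ i, Measurable (X i))
    (hgeo : ∀ i k, P {ω | X i ω = k} = ENNReal.ofReal (p * q ^ k))
    (hindep : iIndepFun X P) :
    ∀ x : ℝ,
      |(P {ω | ∀ i, (X i ω : ℝ) < (Real.log n + x) / Real.log (1 / q)}).toReal -
          Real.exp (-Real.exp (-x))| ≤
        Real.log n / (q * n) + 1 / n + Real.exp (-1) * Real.log (1 / q) := by
  intro x
  have hq0 : 0 < q := by rw [hq]; linarith
  have hq1 : q < 1 := by rw [hq]; linarith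
  set L := Real.log (1 / q) with hLdef
  have hL : 0 < L := Real.log_pos (by rw [one_div]; exact (one_lt_inv₀ hq0).2 hq1)
  set u := (Real.log n + x) / L with hudef
  have hn0 : (0:ℝ) < n := by exact_mod_cast hn
  have hlogq : Real.log q = -L := by rw [hLdef, one_div, Real.log_inv]; ring
  have hqu : (n:ℝ) * q ^ u = Real.exp (-x) := by
    rw [Real.rpow_def_of_pos hq0, hlogq]
    have h1 : -L * u = -(Real.log (n:ℝ) + x) := by
      rw [hudef]; field_simp
    rw [h1, neg_add, Real.exp_add, Real.exp_neg (Real.log (n:ℝ)), Real.exp_log hn0]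
    field_simp
  have hlogn : 0 ≤ Real.log n := Real.log_nonneg (by exact_mod_cast hn)
  have hrhs1 : 0 ≤ Real.log n / (q * n) := by positivity
  have hrhs3 : 0 ≤ Real.exp (-1) * L := by positivity
  rcases le_or_gt u 0 with hu0 | hu0
  · -- empty event case
    have hempty : {ω | ∀ i, (X i ω : ℝ) < u} = ∅ := by
      ext ω
      simp only [Set.mem_setOf_eq, Set.mem_empty_iff_false, iff_false]
      push_neg
      exact ⟨⟨0, hn⟩, le_trans hu0 (Nat.cast_nonneg _)⟩
    rw [hempty, measure_empty]
    simp only [ENNReal.toReal_zero, zero_sub, abs_neg, abs_of_nonneg (Real.exp_pos _).le]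
    have h1q : (1:ℝ) ≤ q ^ u := Real.one_le_rpow_of_pos_of_le_one_of_nonpos hq0 hq1.le hu0
    have hb : (n:ℝ) ≤ Real.exp (-x) := by nlinarith [hqu]
    have h2 : Real.exp (-Real.exp (-x)) ≤ Real.exp (-(n:ℝ)) := Real.exp_le_exp.2 (by linarith)
    have h3 : Real.exp (-(n:ℝ)) ≤ 1 / n := by
      rw [Real.exp_neg, one_div]
      exact inv_anti₀ hn0 (by linarith [Real.add_one_le_exp (n:ℝ)])
    linarith
  · -- main case
    set m := ⌈u⌉₊ with hmdef
    have hm0 : 0 < m := Nat.ceil_pos.2 hu0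
    have hum : u ≤ (m:ℝ) := Nat.le_ceil u
    have hmu : (m:ℝ) - 1 ≤ u := by
      have := Nat.ceil_lt_add_one hu0.le
      linarith
    set s := q ^ m with hsdef
    have hs0 : 0 < s := pow_pos hq0 m
    have hs1 : s < 1 := pow_lt_one₀ hq0.le hq1 hm0.ne'
    -- probability computation
    have hevent : {ω | ∀ i, (X i ω : ℝ) < u} = ⋂ i, X i ⁻¹' (Set.Iio m) := by
      ext ω
      simp only [Set.mem_setOf_eq, Set.mem_iInter, Set.mem_preimage, Set.mem_Iio, hmdef,
        Nat.lt_ceil]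
    have hfac : ∀ i, P (X i ⁻¹' Set.Iio m) = ENNReal.ofReal (1 - s) := by
      intro i
      have hcompl : (X i ⁻¹' Set.Iio m)ᶜ = {ω | m ≤ X i ω} := by
        ext ω; simp [not_lt]
      have htail : P {ω | m ≤ X i ω} = ENNReal.ofReal s :=
        geom_tail P p q hp hp1 hq (X i) (hmeas i) (hgeo i) m
      have hms : MeasurableSet (X i ⁻¹' Set.Iio m) := (hmeas i) measurableSet_Iio
      have := measure_compl hms (measure_ne_top P _)
      rw [hcompl, htail, measure_univ] at this
      have h1 : P (X i ⁻¹' Set.Iio m) = 1 - ENNReal.ofReal s := by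
        rw [this, ENNReal.sub_sub_cancel (by norm_num) prob_le_one]
      rw [h1, ← ENNReal.ofReal_one, ← ENNReal.ofReal_sub _ hs0.le]
    have hprod : P {ω | ∀ i, (X i ω : ℝ) < u} = ENNReal.ofReal ((1 - s) ^ n) := by
      rw [hevent, hindep.meas_iInter (fun i => ⟨Set.Iio m, measurableSet_Iio, rfl⟩)]
      simp_rw [hfac]
      rw [Finset.prod_const, Finset.card_univ, Fintype.card_fin,
        ← ENNReal.ofReal_pow (by linarith)]
    rw [hprod, ENNReal.toReal_ofReal (pow_nonneg (by linarith) n)]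
    -- analysis
    set a := (n:ℝ) * s with hadef
    set b := Real.exp (-x) with hbdef
    have ha0 : 0 < a := by positivity
    have hsmr : s = q ^ (m:ℝ) := (Real.rpow_natCast q m).symm
    have hab : a ≤ b := by
      have : q ^ (m:ℝ) ≤ q ^ u := Real.rpow_le_rpow_of_exponent_ge hq0 hq1.le hum
      rw [← hqu, hadef, hsmr]
      nlinarith
    have hbq : b ≤ a / q := by
      have h1 : q ^ u ≤ q ^ ((m:ℝ) - 1) := Real.rpow_le_rpow_of_exponent_ge hq0 hq1.le hmu
      have h2 : q ^ ((m:ℝ) - 1) = s / q := by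
        rw [hsmr, Real.rpow_sub hq0, Real.rpow_one]
      rw [h2] at h1
      rw [← hqu, hadef, mul_div_assoc]
      exact mul_le_mul_of_nonneg_left h1 hn0.le
    -- part 2
    have hpart2 : Real.exp (-a) - Real.exp (-b) ≤ Real.exp (-1) * L := by
      have h1 := exp_diff_le a b ha0 hab
      have h2 : Real.log b ≤ Real.log a + L := by
        have := Real.log_le_log (by positivity : (0:ℝ) < b) hbq
        rw [Real.log_div ha0.ne' hq0.ne', hlogq] at this
        linarith
      nlinarith [Real.exp_pos (-1:ℝ)]
    have hpart2' : 0 ≤ Real.exp (-a) - Real.exp (-b) := by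
      have := Real.exp_le_exp.2 (neg_le_neg hab)
      linarith
    -- part 1
    set A := Real.exp (-s) with hAdef
    set B := 1 - s with hBdef
    have hB0 : 0 ≤ B := by rw [hBdef]; linarith
    have hBA : B ≤ A := by rw [hAdef, hBdef]; linarith [Real.add_one_le_exp (-s)]
    have hAn : A ^ n = Real.exp (-a) := by
      rw [hAdef, ← Real.exp_nat_mul, hadef]; ring_nf
    have hABq : A - B ≤ s ^ 2 / 2 := by
      have := exp_neg_quad s hs0.le
      rw [hAdef, hBdef]; linarith
    obtain ⟨k, hk⟩ : ∃ k, n = k + 1 := ⟨n - 1, by omega⟩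
    have hApos : 0 ≤ A := (Real.exp_pos _).le
    have hlow : B ^ n ≤ A ^ n := pow_le_pow_left₀ hB0 hBA n
    have hup : A ^ n - B ^ n ≤ (n:ℝ) * A ^ k * (s ^ 2 / 2) := by
      have h1 := pow_sub_pow_le_aux A B hB0 hBA k
      have h2 : ((k:ℝ) + 1) * A ^ k * (A - B) ≤ ((k:ℝ) + 1) * A ^ k * (s ^ 2 / 2) := by
        apply mul_le_mul_of_nonneg_left hABq (by positivity)
      rw [hk]; push_cast
      calc A ^ (k+1) - B ^ (k+1) ≤ ((k:ℝ) + 1) * A ^ k * (A - B) := h1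
        _ ≤ ((k:ℝ) + 1) * A ^ k * (s ^ 2 / 2) := h2
    -- numeric bound on D := n * A^k * s^2/2
    have hD : (n:ℝ) * A ^ k * (s ^ 2 / 2) ≤ Real.log n / (q * n) + 1 / n := by
      rw [hAdef]
      exact Dbound n k hk s q hs0 hs1 hq0 hq1 (Or.inr trivial)
    -- combine
    have hBn0 : 0 ≤ B ^ n := pow_nonneg hB0 n
    have hexpb : Real.exp (-b) ≤ Real.exp (-a) := by
      exact Real.exp_le_exp.2 (neg_le_neg hab)
    rw [abs_le]
    constructor
    · -- lower: -(RHS) ≤ B^n - exp(-b)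
      have : Real.exp (-a) - B ^ n ≤ Real.log n / (q * n) + 1 / n := by
        rw [← hAn]; linarith
      linarith [hpart2', hrhs3, this]
    · have h1 : B ^ n - Real.exp (-b) ≤ (Real.exp (-a) - Real.exp (-b)) := by
        rw [hAn] at hlow; linarith
      linarith
end

section
/- (Parameter inequalities for the Marshall–Olkin geometric distribution) Let p ∈ (0,1) and γ, δ > 0 satisfy (1 + γ + δ)p < 1, and set q_1 = 1 − (1 + γ)p, q_2 = 1 − (1 + δ)p, p_{00} = 1 − (1 + γ + δ)p. Then: (i) 0 ≤ (1+δ)/(1+γ+δ) − (log q_2)/(log p_{00}) ≤ γ p / (1 − (1+γ+δ)p); (ii) 0 ≤ (1+γ)/(1+γ+δ) − (log q_1)/(log p_{00}) ≤ δ p / (1 − (1+γ+δ)p); (iii) 0 ≤ log(q_2 / p_{00}) ≤ γ p / (1 − (1+γ+δ)p); (iv) 0 ≤ log(q_1 / p_{00}) ≤ δ p / (1 − (1+γ+δ)p); (v) log(1/p_{00}) · log( p_{00}/(q_1 q_2) ) ≤ (1+γ+δ)p / (1 − (1+γ+δ)p)². -/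
set_option maxHeartbeats 1000000

open Real Set

lemma MO_aux (p γ δ : ℝ) (hp : 0 < p) (hγ : 0 < γ) (hδ : 0 < δ)
    (h : (1 + γ + δ) * p < 1) :
    (0 ≤ (1 + δ) / (1 + γ + δ) -
        Real.log (1 - (1 + δ) * p) / Real.log (1 - (1 + γ + δ) * p) ∧
      (1 + δ) / (1 + γ + δ) -
        Real.log (1 - (1 + δ) * p) / Real.log (1 - (1 + γ + δ) * p) ≤
        γ * p / (1 - (1 + γ + δ) * p)) ∧
    (0 ≤ Real.log ((1 - (1 + δ) * p) / (1 - (1 + γ + δ) * p)) ∧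
      Real.log ((1 - (1 + δ) * p) / (1 - (1 + γ + δ) * p)) ≤
        γ * p / (1 - (1 + γ + δ) * p)) := by
  set S : ℝ := 1 + γ + δ with hSdef
  set P : ℝ := 1 - S * p with hPdef
  set Q : ℝ := 1 - (1 + δ) * p with hQdef
  have hS : 0 < S := by nlinarith
  have hPpos : 0 < P := by nlinarith
  have hQP : P < Q := by rw [hPdef, hQdef, hSdef]; nlinarith
  have hQpos : 0 < Q := lt_trans hPpos hQP
  have hQ1 : Q < 1 := by rw [hQdef]; nlinarith
  have hP1 : P < 1 := lt_trans hQP hQ1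
  have hlogPneg : Real.log P < 0 := Real.log_neg hPpos hP1
  have hlogPne : Real.log P ≠ 0 := ne_of_lt hlogPneg
  have hLge : S * p ≤ -Real.log P := by
    have := Real.log_le_sub_one_of_pos hPpos
    rw [hPdef] at this; linarith
  -- concavity: (1+δ)/S * log P ≤ log Q
  have hconc : (1 + δ) / S * Real.log P ≤ Real.log Q := by
    have ha : (0:ℝ) ≤ γ / S := by positivity
    have hb : (0:ℝ) ≤ (1 + δ) / S := by positivity
    have hab : γ / S + (1 + δ) / S = 1 := by field_simp; rw [hSdef]; ring
    have := (strictConcaveOn_log_Ioi.concaveOn).2 (mem_Ioi.2 one_pos)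
      (mem_Ioi.2 hPpos) ha hb hab
    simp only [smul_eq_mul, Real.log_one, mul_zero, mul_one, zero_add] at this
    have e : γ / S + (1 + δ) / S * P = Q := by
      rw [hPdef, hQdef]; field_simp; ring
    rw [e] at this
    linarith
  -- (iii)
  have hiii1 : 0 ≤ Real.log (Q / P) :=
    Real.log_nonneg ((one_le_div hPpos).2 hQP.le)
  have hiii2 : Real.log (Q / P) ≤ γ * p / P := by
    have h1 := Real.log_le_sub_one_of_pos (show (0:ℝ) < Q / P by positivity)
    have e : Q / P - 1 = γ * p / P := by
      rw [div_sub_one hPpos.ne']; congr 1; rw [hQdef, hPdef, hSdef]; ring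
    linarith
  have hlogdiv : Real.log (Q / P) = Real.log Q - Real.log P :=
    Real.log_div hQpos.ne' hPpos.ne'
  have hB : Real.log Q - Real.log P ≤ γ * p / P := by rw [← hlogdiv]; exact hiii2
  have hB' : (Real.log Q - Real.log P) * P ≤ γ * p := by
    rw [← le_div_iff₀ hPpos]; exact hB
  -- (i) lower
  have hi1 : Real.log Q / Real.log P ≤ (1 + δ) / S := by
    rw [div_le_iff_of_neg hlogPneg]; exact hconc
  -- key for (i) upper
  have key2 : S * P * Real.log Q ≤ ((1 + δ) * P - S * γ * p) * Real.log P := by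
    have f1 : (γ * P + S * γ * p) * (S * p) ≤ (γ * P + S * γ * p) * (-Real.log P) :=
      mul_le_mul_of_nonneg_left hLge (by positivity)
    have f2 := mul_le_mul_of_nonneg_left hB' hS.le
    have hzero : S * γ * p - γ * S * p * P - S * S * γ * p * p = 0 := by
      rw [hPdef]; ring
    have hS2 : S * P * Real.log P - (1 + δ) * P * Real.log P - γ * P * Real.log P = 0 := by
      rw [hSdef]; ring
    linarith [f1, f2, hzero, hS2]
  have hfin : Real.log Q ≤ ((1 + δ) / S - γ * p / P) * Real.log P := by
    rw [div_sub_div _ _ hS.ne' hPpos.ne', div_mul_eq_mul_div,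
      le_div_iff₀ (by positivity : (0:ℝ) < S * P)]
    nlinarith [key2]
  have hi2 : (1 + δ) / S - Real.log Q / Real.log P ≤ γ * p / P := by
    have := (le_div_iff_of_neg hlogPneg).2 hfin
    linarith
  exact ⟨⟨by linarith, hi2⟩, hiii1, hiii2⟩


/-- **Parameter inequalities for the Marshall–Olkin geometric distribution.** Let
`p ∈ (0,1)` and `γ, δ > 0` with `(1+γ+δ)p < 1`, and set `q₁ = 1 − (1+γ)p`,
`q₂ = 1 − (1+δ)p`, `p₀₀ = 1 − (1+γ+δ)p`.  Then:
(i)  `0 ≤ (1+δ)/(1+γ+δ) − log q₂/log p₀₀ ≤ γp/(1 − (1+γ+δ)p)`;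
(ii) `0 ≤ (1+γ)/(1+γ+δ) − log q₁/log p₀₀ ≤ δp/(1 − (1+γ+δ)p)`;
(iii) `0 ≤ log(q₂/p₀₀) ≤ γp/(1 − (1+γ+δ)p)`;
(iv) `0 ≤ log(q₁/p₀₀) ≤ δp/(1 − (1+γ+δ)p)`;
(v)  `log(1/p₀₀) log(p₀₀/(q₁q₂)) ≤ (1+γ+δ)p/(1 − (1+γ+δ)p)²`. -/
theorem marshall_olkin_geometric_parameter_inequalities
    (p γ δ q₁ q₂ p₀₀ : ℝ) (hp : 0 < p) (hp1 : p < 1) (hγ : 0 < γ) (hδ : 0 < δ)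
    (h : (1 + γ + δ) * p < 1)
    (hq₁ : q₁ = 1 - (1 + γ) * p) (hq₂ : q₂ = 1 - (1 + δ) * p)
    (hp₀₀ : p₀₀ = 1 - (1 + γ + δ) * p) :
    (0 ≤ (1 + δ) / (1 + γ + δ) - Real.log q₂ / Real.log p₀₀ ∧
      (1 + δ) / (1 + γ + δ) - Real.log q₂ / Real.log p₀₀ ≤
        γ * p / (1 - (1 + γ + δ) * p)) ∧
    (0 ≤ (1 + γ) / (1 + γ + δ) - Real.log q₁ / Real.log p₀₀ ∧
      (1 + γ) / (1 + γ + δ) - Real.log q₁ / Real.log p₀₀ ≤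
        δ * p / (1 - (1 + γ + δ) * p)) ∧
    (0 ≤ Real.log (q₂ / p₀₀) ∧
      Real.log (q₂ / p₀₀) ≤ γ * p / (1 - (1 + γ + δ) * p)) ∧
    (0 ≤ Real.log (q₁ / p₀₀) ∧
      Real.log (q₁ / p₀₀) ≤ δ * p / (1 - (1 + γ + δ) * p)) ∧
    Real.log (1 / p₀₀) * Real.log (p₀₀ / (q₁ * q₂)) ≤
      (1 + γ + δ) * p / (1 - (1 + γ + δ) * p) ^ 2 := by
  subst hq₁ hq₂ hp₀₀
  obtain ⟨hi, hiii⟩ := MO_aux p γ δ hp hγ hδ h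
  have h' : (1 + δ + γ) * p < 1 := by
    rw [show (1:ℝ) + δ + γ = 1 + γ + δ by ring]; exact h
  obtain ⟨hii, hiv⟩ := MO_aux p δ γ hp hδ hγ h'
  rw [show (1:ℝ) + δ + γ = 1 + γ + δ by ring] at hii hiv
  refine ⟨hi, hii, hiii, hiv, ?_⟩
  -- part (v)
  set P : ℝ := 1 - (1 + γ + δ) * p with hPdef
  set Q₁ : ℝ := 1 - (1 + γ) * p with hQ₁def
  set Q₂ : ℝ := 1 - (1 + δ) * p with hQ₂def
  have hS : (0:ℝ) < 1 + γ + δ := by linarith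
  have hPpos : 0 < P := by rw [hPdef]; nlinarith
  have hQ₁pos : 0 < Q₁ := by rw [hQ₁def]; nlinarith
  have hQ₂pos : 0 < Q₂ := by rw [hQ₂def]; nlinarith
  have hAnn : 0 ≤ Real.log (1 / P) :=
    Real.log_nonneg (by rw [le_div_iff₀ hPpos]; rw [hPdef]; nlinarith)
  have hAle : Real.log (1 / P) ≤ (1 - P) / P := by
    have h1 := Real.log_le_sub_one_of_pos (show (0:ℝ) < 1 / P by positivity)
    have e : 1 / P - 1 = (1 - P) / P := by field_simp
    linarith
  have hQQpos : 0 < Q₁ * Q₂ := mul_pos hQ₁pos hQ₂pos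
  have hBle : Real.log (P / (Q₁ * Q₂)) ≤ p / P := by
    have h1 := Real.log_le_sub_one_of_pos (show (0:ℝ) < P / (Q₁ * Q₂) by positivity)
    have h2 : P / (Q₁ * Q₂) - 1 ≤ p / P := by
      rw [div_sub_one hQQpos.ne', div_le_div_iff₀ hQQpos hPpos]
      have key : p * (Q₁ * Q₂) - (P - Q₁ * Q₂) * P =
          (γ + δ) * (p ^ 2 * P) + γ * δ * p ^ 3 + γ * δ * (p ^ 2 * P) := by
        rw [hPdef, hQ₁def, hQ₂def]; ring
      nlinarith [mul_pos (mul_pos hp hp) hPpos, mul_pos (mul_pos hp hp) hp,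
        mul_pos hγ hδ, key]
    linarith
  rcases le_or_gt (Real.log (P / (Q₁ * Q₂))) 0 with hc | hc
  · exact le_trans (mul_nonpos_of_nonneg_of_nonpos hAnn hc) (by positivity)
  · calc Real.log (1 / P) * Real.log (P / (Q₁ * Q₂))
        ≤ (1 - P) / P * (p / P) := mul_le_mul hAle hBle hc.le (div_nonneg (by rw [hPdef]; nlinarith) hPpos.le)
      _ ≤ (1 + γ + δ) * p / P ^ 2 := by
          rw [div_mul_div_comm, div_le_div_iff₀ (by positivity) (by positivity)]
          have key : (1 + γ + δ) * p * (P * P) - (1 - P) * p * P ^ 2 =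
              (1 + γ + δ) * p * (1 - p) * P ^ 2 := by rw [hPdef]; ring
          nlinarith [mul_pos (mul_pos (mul_pos hS hp) (show (0:ℝ) < 1 - p by linarith))
            (mul_pos hPpos hPpos), key]
end
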